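/- arXiv:2512.04402 — 5 statements merged into one kernel-verified Lean document; each statement's English description precedes it below -/
import Mathlib

section
/- Let G be a connected graph on at least n vertices with minimum degree δ(G) ≥ n−2. If T is any tree on n vertices that is not the star K_{1,n−1}, then T embeds into G. -/
open SimpleGraph
open scoped Classical

/-- `H` embeds into `G`: there is an injective graph homomorphism from `H` to `G`. -/
def Copies {α : Type*} {β : Type*} (H : SimpleGraph α) (G : SimpleGraph β) : Prop :=
  ∃ f : α → β, Function.Injective f ∧ ∀ ⦃a b : α⦄, H.Adj a b → G.Adj (f a) (f b)

/-- the star `K_{1,ℓ}` with `ℓ` leaves and center `0`. -/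
def starGraph (ℓ : ℕ) : SimpleGraph (Fin (ℓ + 1)) :=
  SimpleGraph.fromRel (fun a _ => a = 0)

/-- the graph of color `i` for a symmetric edge-coloring `c`. -/
def colorGraph {N k : ℕ} (c : Fin N → Fin N → Fin k) (i : Fin k) : SimpleGraph (Fin N) :=
  SimpleGraph.fromRel (fun a b => c a b = i)

/-- `K_N → (G₁, G₂)`: every red-blue coloring of `E(K_N)` yields a red `G₁` or a blue `G₂`. -/
def RamseyProp2 {α β : Type*} (N : ℕ) (G₁ : SimpleGraph α) (G₂ : SimpleGraph β) : Prop :=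
  ∀ R : SimpleGraph (Fin N), Copies G₁ R ∨ Copies G₂ Rᶜ

/-- the 2-color Ramsey number `r(G₁, G₂)`. -/
noncomputable def ramsey2 {α β : Type*} (G₁ : SimpleGraph α) (G₂ : SimpleGraph β) : ℕ :=
  sInf {N | RamseyProp2 N G₁ G₂}

/-- `K_N → (G₁, G₂, G₃)` for 3-colorings. -/
def RamseyProp3 {α β γ : Type*} (N : ℕ) (G₁ : SimpleGraph α) (G₂ : SimpleGraph β)
    (G₃ : SimpleGraph γ) : Prop :=
  ∀ c : Fin N → Fin N → Fin 3, (∀ a b, c a b = c b a) →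
    Copies G₁ (colorGraph c 0) ∨ Copies G₂ (colorGraph c 1) ∨ Copies G₃ (colorGraph c 2)

/-- the 3-color Ramsey number `r(G₁, G₂, G₃)`. -/
noncomputable def ramsey3 {α β γ : Type*} (G₁ : SimpleGraph α) (G₂ : SimpleGraph β)
    (G₃ : SimpleGraph γ) : ℕ :=
  sInf {N | RamseyProp3 N G₁ G₂ G₃}

/-- the chromatic number as a natural number. -/
noncomputable def chrom {β : Type*} (H : SimpleGraph β) : ℕ :=
  sInf {k | H.Colorable k}

/-- the surplus `s(H)`: the minimum size of a color class over proper colorings of `H`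
with `chrom H` colors. -/
noncomputable def surplus {β : Type*} [Fintype β] (H : SimpleGraph β) : ℕ :=
  sInf {s | ∃ C : H.Coloring (Fin (chrom H)), ∃ i : Fin (chrom H),
    s = (Finset.univ.filter (fun v => C v = i)).card}

lemma GV_closed_all {V : Type*} {G : SimpleGraph V} (hconn : G.Preconnected) {A : Set V}
    {a : V} (ha : a ∈ A) (hclosed : ∀ x ∈ A, ∀ b, G.Adj x b → b ∈ A) :
    ∀ v, v ∈ A := by
  intro v
  obtain ⟨w⟩ := hconn a v
  clear hconn
  induction w with
  | nil => exact ha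
  | cons h p ih => exact ih (hclosed _ ha _ h)

lemma GV_unique_attach {V : Type*} {G : SimpleGraph V} (hG : G.IsAcyclic) {x a b : V}
    (hxa : G.Adj x a) (hxb : G.Adj x b) (w : G.Walk a b) (hx : x ∉ w.support) :
    a = b := by
  classical
  by_contra hab
  let p1 : G.Path a b := w.toPath
  have hxp1 : x ∉ p1.1.support := fun hmem => hx (Walk.support_bypass_subset _ hmem)
  let p2 : G.Path a b := ⟨Walk.cons hxa.symm (Walk.cons hxb Walk.nil), by
    rw [Walk.isPath_def]; simp [hxa.ne, hxa.ne', hxb.ne, hab]⟩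
  have := (isAcyclic_iff_path_unique.mp hG) p1 p2
  rw [this] at hxp1
  simp [p2] at hxp1

lemma GV_grow {n : ℕ} {V : Type*} [Fintype V] (T : SimpleGraph (Fin n)) (hT : T.IsTree)
    (G : SimpleGraph V) (hdeg : ∀ v : V, n - 2 ≤ G.degree v) (hn : 4 ≤ n)
    (y2 q2 : Fin n) (hleaf : ∀ w, T.Adj y2 w → w = q2) (hy2q2 : T.Adj y2 q2) :
    ∀ (k : ℕ) (A : Finset (Fin n)) (f : Fin n → V),
      A.card + k + 1 = n →
      y2 ∉ A → q2 ∈ A →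
      (∀ a ∈ A, ∀ b ∈ A, T.Adj a b → G.Adj (f a) (f b)) →
      (∀ a ∈ A, ∀ b ∈ A, f a = f b → a = b) →
      (∀ a ∈ A, ∃ p : T.Walk q2 a, ∀ x ∈ p.support, x ∈ A) →
      (∀ B : Finset V, (∀ a ∈ A, f a ∈ B) → B.card ≤ n - 1 → ∃ x, G.Adj (f q2) x ∧ x ∉ B) →
      ∃ g : Fin n → V, Function.Injective g ∧ ∀ ⦃a b⦄, T.Adj a b → G.Adj (g a) (g b) := by
  intro k
  induction k with
  | zero =>
    intro A f hcard hy2 hq2 hhom hinj hwalk hspare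
    have hAeq : A = Finset.univ.erase y2 := by
      apply Finset.eq_of_subset_of_card_le
      · intro a ha
        exact Finset.mem_erase.mpr ⟨fun h => hy2 (h ▸ ha), Finset.mem_univ _⟩
      · rw [Finset.card_erase_of_mem (Finset.mem_univ _), Finset.card_fin]
        omega
    have hmemA : ∀ a : Fin n, a ≠ y2 → a ∈ A := by
      intro a ha
      rw [hAeq]
      exact Finset.mem_erase.mpr ⟨ha, Finset.mem_univ _⟩
    obtain ⟨x, hadjx, hxB⟩ := hspare (A.image f)
      (fun a ha => Finset.mem_image_of_mem f ha)
      (by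
        have h1 : (A.image f).card ≤ A.card := Finset.card_image_le
        omega)
    have hq2y2 : q2 ≠ y2 := fun h => hy2 (h ▸ hq2)
    refine ⟨Function.update f y2 x, ?_, ?_⟩
    · intro a b hab
      by_cases hay : a = y2 <;> by_cases hby : b = y2
      · rw [hay, hby]
      · exfalso
        rw [hay, Function.update_self, Function.update_of_ne hby] at hab
        exact hxB (hab ▸ Finset.mem_image_of_mem f (hmemA b hby))
      · exfalso
        rw [hby, Function.update_self, Function.update_of_ne hay] at hab
        exact hxB (hab ▸ Finset.mem_image_of_mem f (hmemA a hay))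
      · rw [Function.update_of_ne hay, Function.update_of_ne hby] at hab
        exact hinj a (hmemA a hay) b (hmemA b hby) hab
    · intro a b hadj
      by_cases hay : a = y2 <;> by_cases hby : b = y2
      · rw [hay, hby] at hadj; exact absurd hadj (T.loopless.irrefl y2)
      · subst hay
        have hbq : b = q2 := hleaf b hadj
        subst hbq
        rw [Function.update_self, Function.update_of_ne hq2y2]
        exact hadjx.symm
      · subst hby
        have haq : a = q2 := hleaf a hadj.symm
        subst haq
        rw [Function.update_self, Function.update_of_ne hq2y2]
        exact hadjx
      · rw [Function.update_of_ne hay, Function.update_of_ne hby]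
        exact hhom a (hmemA a hay) b (hmemA b hby) hadj
  | succ k ih =>
    intro A f hcard hy2 hq2 hhom hinj hwalk hspare
    -- there is a vertex outside insert y2 A
    have hv0 : ∃ v : Fin n, v ∉ (insert y2 A : Finset (Fin n)) := by
      by_contra hk2
      push_neg at hk2
      have h1 : (Finset.univ : Finset (Fin n)).card ≤ (insert y2 A).card :=
        Finset.card_le_card (fun v _ => hk2 v)
      have h2 : (insert y2 A).card ≤ A.card + 1 := Finset.card_insert_le _ _
      rw [Finset.card_fin] at h1
      omega
    obtain ⟨v0, hv0⟩ := hv0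
    -- exit edge
    have hexit : ∃ a ∈ A, ∃ x, T.Adj a x ∧ x ∉ (insert y2 A : Finset (Fin n)) := by
      by_contra hk2
      push_neg at hk2
      have hall := GV_closed_all hT.isConnected.preconnected
        (A := ((insert y2 A : Finset (Fin n)) : Set (Fin n)))
        (a := y2) (by simp)
        (fun x hx b hadj => by
          simp only [Finset.coe_insert, Set.mem_insert_iff, Finset.mem_coe] at hx ⊢
          rcases hx with rfl | hx
          · right; exact (hleaf b hadj) ▸ hq2
          · have := hk2 x hx b hadj
            simp only [Finset.mem_insert] at this
            tauto) v0
      simp only [Finset.coe_insert, Set.mem_insert_iff, Finset.mem_coe] at hall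
      rw [Finset.mem_insert] at hv0
      tauto
    obtain ⟨astar, hastar, x, hadjax, hxout⟩ := hexit
    rw [Finset.mem_insert] at hxout
    push_neg at hxout
    obtain ⟨hxy2, hxA⟩ := hxout
    -- fresh image
    have hfresh : ((G.neighborFinset (f astar)) \ (A.image f)).Nonempty := by
      rw [Finset.sdiff_nonempty]
      intro hsub
      have hsub2 : G.neighborFinset (f astar) ⊆ (A.image f).erase (f astar) := by
        intro z hz
        refine Finset.mem_erase.mpr ⟨?_, hsub hz⟩
        intro hzeq
        rw [SimpleGraph.mem_neighborFinset] at hz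
        exact G.loopless.irrefl _ (hzeq ▸ hz)
      have h1 := Finset.card_le_card hsub2
      have h2 : ((A.image f).erase (f astar)).card = (A.image f).card - 1 :=
        Finset.card_erase_of_mem (Finset.mem_image_of_mem f hastar)
      have h3 : (A.image f).card ≤ A.card := Finset.card_image_le
      have h4 : n - 2 ≤ (G.neighborFinset (f astar)).card := hdeg (f astar)
      have h5 : 1 ≤ (A.image f).card := Finset.card_pos.mpr ⟨f astar, Finset.mem_image_of_mem f hastar⟩
      omega
    obtain ⟨u, hu⟩ := hfresh
    rw [Finset.mem_sdiff, SimpleGraph.mem_neighborFinset] at hu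
    obtain ⟨huadj, huim⟩ := hu
    -- new data
    refine ih (insert x A) (Function.update f x u) ?_ ?_ ?_ ?_ ?_ ?_ ?_
    · rw [Finset.card_insert_of_notMem hxA]
      omega
    · simp only [Finset.mem_insert]
      push_neg
      exact ⟨Ne.symm hxy2, hy2⟩
    · exact Finset.mem_insert_of_mem hq2
    · -- hom
      intro a ha b hb hadj
      rw [Finset.mem_insert] at ha hb
      by_cases hax : a = x <;> by_cases hbx : b = x
      · rw [hax, hbx] at hadj; exact absurd hadj (T.loopless.irrefl x)
      · have hb' : b ∈ A := hb.resolve_left hbx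
        rw [hax] at hadj ⊢
        have hbeq : astar = b := by
          obtain ⟨p1, hp1⟩ := hwalk astar hastar
          obtain ⟨p2, hp2⟩ := hwalk b hb'
          refine GV_unique_attach hT.IsAcyclic hadjax.symm hadj (p1.reverse.append p2) ?_
          intro hmem
          rw [Walk.mem_support_append_iff] at hmem
          rcases hmem with hmem | hmem
          · rw [Walk.support_reverse, List.mem_reverse] at hmem
            exact hxA (hp1 _ hmem)
          · exact hxA (hp2 _ hmem)
        rw [Function.update_self, Function.update_of_ne hbx, ← hbeq]
        exact huadj.symm
      · have ha' : a ∈ A := ha.resolve_left hax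
        rw [hbx] at hadj ⊢
        have haeq : astar = a := by
          obtain ⟨p1, hp1⟩ := hwalk astar hastar
          obtain ⟨p2, hp2⟩ := hwalk a ha'
          refine GV_unique_attach hT.IsAcyclic hadjax.symm hadj.symm (p1.reverse.append p2) ?_
          intro hmem
          rw [Walk.mem_support_append_iff] at hmem
          rcases hmem with hmem | hmem
          · rw [Walk.support_reverse, List.mem_reverse] at hmem
            exact hxA (hp1 _ hmem)
          · exact hxA (hp2 _ hmem)
        rw [Function.update_self, Function.update_of_ne hax, ← haeq]
        exact huadj
      · have ha' : a ∈ A := ha.resolve_left hax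
        have hb' : b ∈ A := hb.resolve_left hbx
        rw [Function.update_of_ne hax, Function.update_of_ne hbx]
        exact hhom a ha' b hb' hadj
    · -- inj
      intro a ha b hb hab
      rw [Finset.mem_insert] at ha hb
      by_cases hax : a = x <;> by_cases hbx : b = x
      · rw [hax, hbx]
      · exfalso
        have hb' : b ∈ A := hb.resolve_left hbx
        rw [hax, Function.update_self, Function.update_of_ne hbx] at hab
        exact huim (hab ▸ Finset.mem_image_of_mem f hb')
      · exfalso
        have ha' : a ∈ A := ha.resolve_left hax
        rw [hbx, Function.update_self, Function.update_of_ne hax] at hab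
        exact huim (hab ▸ Finset.mem_image_of_mem f ha')
      · have ha' : a ∈ A := ha.resolve_left hax
        have hb' : b ∈ A := hb.resolve_left hbx
        rw [Function.update_of_ne hax, Function.update_of_ne hbx] at hab
        exact hinj a ha' b hb' hab
    · -- walks
      intro a ha
      rw [Finset.mem_insert] at ha
      by_cases hax : a = x
      · obtain ⟨p, hp⟩ := hwalk astar hastar
        refine ⟨(p.append (Walk.cons hadjax Walk.nil)).copy rfl hax.symm, ?_⟩
        intro z hz
        rw [Walk.support_copy, Walk.mem_support_append_iff] at hz
        rcases hz with hz | hz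
        · exact Finset.mem_insert_of_mem (hp _ hz)
        · have hz2 : z = astar ∨ z = x := by simpa using hz
          rcases hz2 with hz2 | hz2
          · rw [hz2]; exact Finset.mem_insert_of_mem hastar
          · rw [hz2]; exact Finset.mem_insert_self _ _
      · have ha' : a ∈ A := ha.resolve_left hax
        obtain ⟨p, hp⟩ := hwalk a ha'
        exact ⟨p, fun z hz => Finset.mem_insert_of_mem (hp _ hz)⟩
    · -- spare
      intro B hB hBcard
      have hq2x : q2 ≠ x := fun h => hxA (h ▸ hq2)
      rw [Function.update_of_ne hq2x]
      refine hspare B (fun a ha => ?_) hBcard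
      have := hB a (Finset.mem_insert_of_mem ha)
      rwa [Function.update_of_ne (show a ≠ x from fun h => hxA (by rwa [h] at ha))] at this

lemma GV_no_triangle {V : Type*} {G : SimpleGraph V} (hG : G.IsAcyclic) {a b c : V}
    (h1 : G.Adj a b) (h2 : G.Adj b c) (h3 : G.Adj a c) : False := by
  classical
  let p1 : G.Path a c := ⟨Walk.cons h3 Walk.nil, by
    rw [Walk.isPath_def]; simp [h3.ne]⟩
  let p2 : G.Path a c := ⟨Walk.cons h1 (Walk.cons h2 Walk.nil), by
    rw [Walk.isPath_def]; simp [h1.ne, h3.ne, h2.ne]⟩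
  have := (isAcyclic_iff_path_unique.mp hG) p1 p2
  have hs : p1.1.support = p2.1.support := by rw [this]
  simp [p1, p2] at hs

/-- a tree with a universal vertex is a star -/
lemma GV_star_iso {n : ℕ} (T : SimpleGraph (Fin n)) (hT : T.IsTree) (c : Fin n)
    (huniv : ∀ w, w ≠ c → T.Adj c w) : Nonempty (T ≃g _root_.starGraph (n - 1)) := by
  have hn : 0 < n := by
    rcases Nat.eq_zero_or_pos n with h | h
    · exact absurd (h ▸ c).isLt (by omega)
    · exact h
  have hchar : ∀ a b : Fin n, T.Adj a b ↔ a ≠ b ∧ (a = c ∨ b = c) := by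
    intro a b
    constructor
    · intro h
      refine ⟨h.ne, ?_⟩
      by_contra hk
      push_neg at hk
      exact GV_no_triangle hT.IsAcyclic (huniv a hk.1) h (huniv b hk.2)
    · rintro ⟨hne, hc | hc⟩
      · subst hc; exact huniv b (Ne.symm hne)
      · subst hc; exact (huniv a hne).symm
  haveI : NeZero n := ⟨by omega⟩
  have hcast : n = n - 1 + 1 := by omega
  let e : Fin n ≃ Fin (n - 1 + 1) := (Equiv.swap c 0).trans (finCongr hcast)
  refine ⟨⟨e, ?_⟩⟩
  intro a b
  have hz : ∀ x : Fin n, (e x = 0) ↔ x = c := by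
    intro x
    simp only [e, Equiv.trans_apply, finCongr_apply]
    constructor
    · intro h
      have : (Equiv.swap c 0) x = 0 := by
        have := congrArg Fin.val h
        simp at this
        exact this
      rw [Equiv.swap_apply_eq_iff] at this
      simpa using this
    · intro h; subst h; simp [Fin.ext_iff]
  have hinj : ∀ x y : Fin n, e x = e y ↔ x = y := fun x y => e.apply_eq_iff_eq
  constructor
  · intro h
    rw [_root_.starGraph, fromRel_adj] at h
    rw [hchar]
    refine ⟨fun hk => h.1 (by rw [hk]), ?_⟩
    rcases h.2 with h' | h'
    · left; exact (hz a).mp h'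
    · right; exact (hz b).mp h'
  · intro h
    rw [hchar] at h
    rw [_root_.starGraph, fromRel_adj]
    refine ⟨fun hk => h.1 ((hinj a b).mp hk), ?_⟩
    rcases h.2 with h' | h'
    · left; exact (hz a).mpr h'
    · right; exact (hz b).mpr h'

lemma GV_small_univ {n : ℕ} (T : SimpleGraph (Fin n)) (hT : T.IsTree) (hn3 : n ≤ 3) :
    ∃ c : Fin n, ∀ w, w ≠ c → T.Adj c w := by
  have hn0 : 0 < n := by
    rcases Nat.eq_zero_or_pos n with h | h
    · obtain ⟨x⟩ := hT.isConnected.nonempty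
      exact absurd x.isLt (by omega)
    · exact h
  haveI : NeZero n := ⟨by omega⟩
  interval_cases n
  · -- n = 1
    refine ⟨0, fun w hw => ?_⟩
    exact absurd (Subsingleton.elim w 0) hw
  · -- n = 2
    refine ⟨0, fun w hw => ?_⟩
    have hw1 : w = 1 := by omega
    subst hw1
    obtain ⟨p⟩ := hT.isConnected.preconnected 0 1
    cases p
    case cons b h q =>
      have hb : b = 1 := by
        have h0 : b ≠ 0 := fun hh => h.ne (hh.symm)
        have h2 : b.val < 2 := b.isLt
        have h0v : b.val ≠ 0 := fun hh => h0 (Fin.ext hh)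
        exact Fin.ext (by omega)
      rwa [hb] at h
  · -- n = 3
    have hsum : ∑ v : Fin 3, T.degree v = 4 := by
      rw [T.sum_degrees_eq_twice_card_edges]
      have := hT.card_edgeFinset
      rw [Fintype.card_fin] at this
      omega
    have hex : ∃ v : Fin 3, 2 ≤ T.degree v := by
      by_contra hk
      push_neg at hk
      have : ∑ v : Fin 3, T.degree v ≤ ∑ _v : Fin 3, 1 :=
        Finset.sum_le_sum (fun i _ => by have := hk i; omega)
      simp at this
      omega
    obtain ⟨v, hv⟩ := hex
    have hlt : T.degree v < 3 := by
      have := T.degree_lt_card_verts v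
      simpa using this
    have hdeg : T.degree v = 2 := by omega
    refine ⟨v, fun w hw => ?_⟩
    have hsub : T.neighborFinset v ⊆ Finset.univ.erase v := by
      intro x hx
      rw [SimpleGraph.mem_neighborFinset] at hx
      exact Finset.mem_erase.mpr ⟨hx.ne', Finset.mem_univ _⟩
    have hcards : (Finset.univ.erase v).card ≤ (T.neighborFinset v).card := by
      rw [Finset.card_erase_of_mem (Finset.mem_univ v)]
      have h1 : (T.neighborFinset v).card = T.degree v := rfl
      rw [h1, hdeg]
      simp
    have := Finset.eq_of_subset_of_card_le hsub hcards
    have hwmem : w ∈ T.neighborFinset v := by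
      rw [this]
      exact Finset.mem_erase.mpr ⟨hw, Finset.mem_univ _⟩
    rwa [SimpleGraph.mem_neighborFinset] at hwmem

lemma GV_find_path {n : ℕ} (T : SimpleGraph (Fin n)) (hT : T.IsTree) (hn : 4 ≤ n)
    (hnostar : ¬ ∃ c : Fin n, ∀ w, w ≠ c → T.Adj c w) :
    ∃ y2 q2 r s : Fin n, (∀ w, T.Adj y2 w → w = q2) ∧ T.Adj y2 q2 ∧ T.Adj q2 r ∧
      T.Adj r s ∧ s ≠ q2 ∧ ¬ T.Adj q2 s ∧ y2 ≠ q2 ∧ y2 ≠ r ∧ y2 ≠ s := by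
  haveI : NeZero n := ⟨by omega⟩
  -- find a leaf
  obtain ⟨y2, -, hy2min⟩ := Finset.exists_min_image Finset.univ (fun v => T.degree v) ⟨0, Finset.mem_univ 0⟩
  have hsum : ∑ v : Fin n, T.degree v = 2 * (n - 1) := by
    rw [T.sum_degrees_eq_twice_card_edges]
    have := hT.card_edgeFinset
    rw [Fintype.card_fin] at this
    omega
  have hdegle : T.degree y2 ≤ 1 := by
    by_contra hk
    push_neg at hk
    have : ∀ i ∈ Finset.univ, 2 ≤ T.degree i := fun i _ => le_trans hk (hy2min i (Finset.mem_univ i))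
    have h2 : (Finset.univ : Finset (Fin n)).card • 2 ≤ ∑ v : Fin n, T.degree v :=
      Finset.card_nsmul_le_sum _ _ _ this
    simp at h2
    omega
  have hdegpos : T.degree y2 ≠ 0 := by
    intro h0
    have hempty : T.neighborFinset y2 = ∅ := Finset.card_eq_zero.mp h0
    obtain ⟨v, hv⟩ := Fintype.exists_ne_of_one_lt_card (by simp; omega) y2
    have := GV_closed_all hT.isConnected.preconnected (A := {y2}) rfl
      (fun x hx b hadj => by
        rcases hx with rfl
        exact absurd ((T.mem_neighborFinset x b).mpr hadj) (by simp [hempty])) v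
    exact hv this
  have hdeg1 : T.degree y2 = 1 := by omega
  obtain ⟨q2, hq2⟩ := Finset.card_eq_one.mp hdeg1
  have hleaf : ∀ w, T.Adj y2 w → w = q2 := by
    intro w hw
    have : w ∈ T.neighborFinset y2 := (T.mem_neighborFinset y2 w).mpr hw
    rw [hq2] at this
    simpa using this
  have hadj1 : T.Adj y2 q2 := by
    have : q2 ∈ T.neighborFinset y2 := by rw [hq2]; simp
    rwa [T.mem_neighborFinset] at this
  -- find r, s
  have hrs : ∃ r s : Fin n, T.Adj q2 r ∧ T.Adj r s ∧ s ≠ q2 := by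
    by_contra hk
    push_neg at hk
    apply hnostar
    refine ⟨q2, fun w hw => ?_⟩
    have hall := GV_closed_all hT.isConnected.preconnected
      (A := insert q2 {x | T.Adj q2 x}) (Set.mem_insert _ _)
      (fun x hx b hadj => by
        rcases hx with rfl | hx
        · exact Set.mem_insert_of_mem _ hadj
        · have := hk x b hx hadj
          rw [this]; exact Set.mem_insert _ _) w
    rcases hall with rfl | hall
    · exact absurd rfl hw
    · exact hall
  obtain ⟨r, s, hadj2, hadj3, hsq2⟩ := hrs
  have hnadj : ¬ T.Adj q2 s := fun hk => GV_no_triangle hT.IsAcyclic hadj2 hadj3 hk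
  have hy2r : y2 ≠ r := by
    rintro rfl
    exact hsq2 (hleaf s hadj3)
  have hy2s : y2 ≠ s := by
    rintro rfl
    exact hadj2.ne' (hleaf r hadj3.symm) |>.elim
  exact ⟨y2, q2, r, s, hleaf, hadj1, hadj2, hadj3, hsq2, hnadj, hadj1.ne, hy2r, hy2s⟩

theorem stmt2 {V : Type*} [Fintype V] (n : ℕ) (G : SimpleGraph V)
    (hconn : G.Connected) (hcard : n ≤ Fintype.card V) (hδ : n - 2 ≤ G.minDegree)
    (T : SimpleGraph (Fin n)) (hT : T.IsTree)
    (hstar : ¬ Nonempty (T ≃g _root_.starGraph (n - 1))) :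
    Copies T G := by
  classical
  by_cases huniv : ∃ c : Fin n, ∀ w, w ≠ c → T.Adj c w
  · obtain ⟨c, hc⟩ := huniv
    exact absurd (GV_star_iso T hT c hc) hstar
  · have hn : 4 ≤ n := by
      by_contra hk
      push_neg at hk
      exact huniv (GV_small_univ T hT (by omega))
    obtain ⟨y2, q2, r, s, hleaf, hadj1, hadj2, hadj3, hsq2, hnadj, hy2q2, hy2r, hy2s⟩ :=
      GV_find_path T hT hn huniv
    have hdeg : ∀ v : V, n - 2 ≤ G.degree v := fun v => le_trans hδ (G.minDegree_le_degree v)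
    have grow := GV_grow T hT G hdeg hn y2 q2 hleaf hadj1
    have main : ∃ g : Fin n → V, Function.Injective g ∧
        ∀ ⦃a b⦄, T.Adj a b → G.Adj (g a) (g b) := by
      classical
      by_cases hbig : ∃ v : V, n - 1 ≤ G.degree v
      · obtain ⟨v, hv⟩ := hbig
        refine grow (n - 2) {q2} (fun _ => v) ?_ ?_ ?_ ?_ ?_ ?_ ?_
        · simp; omega
        · simp [hy2q2]
        · simp
        · intro a ha b hb hadj
          rw [Finset.mem_singleton] at ha hb
          rw [ha, hb] at hadj
          exact absurd hadj (T.loopless.irrefl _)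
        · intro a ha b hb _
          rw [Finset.mem_singleton] at ha hb
          rw [ha, hb]
        · intro a ha
          rw [Finset.mem_singleton] at ha
          refine ⟨(Walk.nil).copy rfl ha.symm, ?_⟩
          intro z hz
          rw [Walk.support_copy] at hz
          simp at hz
          simp [hz, ha]
        · intro B hB hBcard
          by_contra hk
          push_neg at hk
          have hsub : G.neighborFinset v ⊆ B.erase v := by
            intro z hz
            rw [SimpleGraph.mem_neighborFinset] at hz
            refine Finset.mem_erase.mpr ⟨hz.ne', hk z hz⟩
          have h1 := Finset.card_le_card hsub
          have h2 : (B.erase v).card = B.card - 1 :=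
            Finset.card_erase_of_mem (hB q2 (Finset.mem_singleton_self q2))
          have h3 : n - 1 ≤ (G.neighborFinset v).card := hv
          have h4 : 1 ≤ B.card := Finset.card_pos.mpr ⟨v, hB q2 (Finset.mem_singleton_self q2)⟩
          omega
      · push_neg at hbig
        have hdeq : ∀ v : V, G.degree v = n - 2 := by
          intro v
          have h1 := hdeg v
          have h2 := hbig v
          omega
        by_cases hvco : ∃ (v c o : V), G.Adj v c ∧ G.Adj c o ∧ o ≠ v ∧ ¬ G.Adj v o
        · obtain ⟨v, c, o, hvc, hco, hov, hnvo⟩ := hvco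
          set f0 : Fin n → V := fun t => if t = q2 then v else if t = r then c else o with hf0
          have hq2r : q2 ≠ r := hadj2.ne
          have hrs : r ≠ s := hadj3.ne
          have hfq2 : f0 q2 = v := by simp [hf0]
          have hfr : f0 r = c := by simp [hf0, Ne.symm hq2r]
          have hfs : f0 s = o := by simp [hf0, hsq2, Ne.symm hrs]
          have hcardA : ({q2, r, s} : Finset (Fin n)).card = 3 := by
            rw [Finset.card_insert_of_notMem (by simp [hq2r, Ne.symm hsq2]),
                Finset.card_insert_of_notMem (by simp [hrs])]
            simp
          refine grow (n - 4) {q2, r, s} f0 ?_ ?_ ?_ ?_ ?_ ?_ ?_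
          · rw [hcardA]; omega
          · simp [hy2q2, hy2r, hy2s]
          · simp
          · intro a ha b hb hadj
            simp only [Finset.mem_insert, Finset.mem_singleton] at ha hb
            rcases ha with ha | ha | ha <;> rcases hb with hb | hb | hb <;>
              rw [ha] at hadj ⊢ <;> rw [hb] at hadj ⊢
            · exact absurd hadj (T.loopless.irrefl _)
            · rw [hfq2, hfr]; exact hvc
            · exact absurd hadj hnadj
            · rw [hfq2, hfr]; exact hvc.symm
            · exact absurd hadj (T.loopless.irrefl _)
            · rw [hfr, hfs]; exact hco
            · exact absurd hadj.symm hnadj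
            · rw [hfr, hfs]; exact hco.symm
            · exact absurd hadj (T.loopless.irrefl _)
          · intro a ha b hb hab
            simp only [Finset.mem_insert, Finset.mem_singleton] at ha hb
            rcases ha with ha | ha | ha <;> rcases hb with hb | hb | hb <;>
              rw [ha] at hab ⊢ <;> rw [hb] at hab ⊢ <;>
              simp only [hfq2, hfr, hfs] at hab
            · exact absurd hab hvc.ne
            · exact absurd hab.symm hov
            · exact absurd hab hvc.ne'
            · exact absurd hab hco.ne
            · exact absurd hab hov
            · exact absurd hab hco.ne'
          · intro a ha
            simp only [Finset.mem_insert, Finset.mem_singleton] at ha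
            rcases ha with ha | ha | ha
            · refine ⟨(Walk.nil).copy rfl ha.symm, ?_⟩
              intro z hz
              rw [Walk.support_copy] at hz
              simp only [Walk.support_nil, List.mem_singleton] at hz
              simp [hz]
            · refine ⟨(Walk.cons hadj2 Walk.nil).copy rfl ha.symm, ?_⟩
              intro z hz
              rw [Walk.support_copy] at hz
              have hz2 : z = q2 ∨ z = r := by simpa using hz
              rcases hz2 with h | h <;> simp [h]
            · refine ⟨(Walk.cons hadj2 (Walk.cons hadj3 Walk.nil)).copy rfl ha.symm, ?_⟩
              intro z hz
              rw [Walk.support_copy] at hz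
              have hz2 : z = q2 ∨ z = r ∨ z = s := by simpa using hz
              rcases hz2 with h | h | h <;> simp [h]
          · intro B hB hBcard
            by_contra hk
            push_neg at hk
            have hvB : v ∈ B := by have := hB q2 (by simp); rwa [hfq2] at this
            have hoB : o ∈ B := by have := hB s (by simp); rwa [hfs] at this
            rw [hfq2] at hk
            have hvnot : v ∉ insert o (G.neighborFinset v) := by
              simp only [Finset.mem_insert, G.mem_neighborFinset]
              push_neg
              exact ⟨Ne.symm hov, fun h => (G.loopless.irrefl v h)⟩
            have honot : o ∉ G.neighborFinset v := by
              rw [G.mem_neighborFinset]; exact hnvo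
            have hsub : insert v (insert o (G.neighborFinset v)) ⊆ B := by
              intro z hz
              simp only [Finset.mem_insert] at hz
              rcases hz with rfl | rfl | hz
              · exact hvB
              · exact hoB
              · exact hk z ((G.mem_neighborFinset v z).mp hz)
            have h1 := Finset.card_le_card hsub
            have h2 : (insert v (insert o (G.neighborFinset v))).card
                = (G.neighborFinset v).card + 1 + 1 := by
              rw [Finset.card_insert_of_notMem hvnot, Finset.card_insert_of_notMem honot]
            have h3 : (G.neighborFinset v).card = n - 2 := hdeq v
            omega
        · exfalso
          push_neg at hvco
          obtain ⟨v⟩ := hconn.nonempty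
          have hall := GV_closed_all hconn.preconnected
            (A := insert v {x | G.Adj v x}) (a := v) (Set.mem_insert _ _)
            (fun x hx b hadj => by
              rcases hx with rfl | hx
              · exact Set.mem_insert_of_mem _ hadj
              · rcases eq_or_ne b v with rfl | hbv
                · exact Set.mem_insert _ _
                · by_cases hvb : G.Adj v b
                  · exact Set.mem_insert_of_mem _ hvb
                  · exact absurd (hvco v x b (by exact hx) hadj hbv) (by simp [hvb]))
          have hsub : (Finset.univ : Finset V) ⊆ insert v (G.neighborFinset v) := by
            intro z _
            rcases hall z with rfl | hz
            · exact Finset.mem_insert_self _ _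
            · exact Finset.mem_insert_of_mem ((G.mem_neighborFinset v z).mpr hz)
          have h1 := Finset.card_le_card hsub
          have h2 : (insert v (G.neighborFinset v)).card ≤ 1 + (n - 2) := by
            have := Finset.card_insert_le v (G.neighborFinset v)
            have h3 : (G.neighborFinset v).card = n - 2 := hdeq v
            omega
          rw [Finset.card_univ] at h1
          omega
    obtain ⟨g, hgi, hgh⟩ := main
    exact ⟨g, hgi, hgh⟩
end

section
/- For a connected graph G and a graph H with v(G) ≥ s(H), the Ramsey number satisfies r(G, H) ≥ (v(G)−1)(χ(H)−1) + s(H). -/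
open SimpleGraph
open scoped Classical

lemma copies_top_zero {N : ℕ} (R : SimpleGraph (Fin N)) :
    Copies (⊤ : SimpleGraph (Fin 0)) R :=
  ⟨Fin.elim0, fun a => a.elim0, fun a => a.elim0⟩

lemma ramsey_step {m p N M : ℕ} (R : SimpleGraph (Fin N)) (v : Fin N) (A : Finset (Fin N))
    (hA : ∀ u ∈ A, R.Adj v u) (hM : M ≤ A.card)
    (hI : ∀ R' : SimpleGraph (Fin M),
      Copies (⊤ : SimpleGraph (Fin m)) R' ∨ Copies (⊤ : SimpleGraph (Fin p)) R'ᶜ) :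
    Copies (⊤ : SimpleGraph (Fin (m + 1))) R ∨ Copies (⊤ : SimpleGraph (Fin p)) Rᶜ := by
  obtain ⟨A', hA'sub, hA'card⟩ := Finset.exists_subset_card_eq hM
  set g : Fin M → Fin N := fun i => (A'.orderIsoOfFin hA'card i : Fin N) with hg
  have hginj : Function.Injective g := by
    intro a b hab
    exact (A'.orderIsoOfFin hA'card).injective (Subtype.ext hab)
  have hgA : ∀ i, g i ∈ A := fun i => hA'sub (A'.orderIsoOfFin hA'card i).2
  rcases hI (R.comap g) with ⟨f, finj, fhom⟩ | ⟨f, finj, fhom⟩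
  · left
    refine ⟨fun i => if h : (i : ℕ) < m then g (f ⟨i, h⟩) else v, ?_, ?_⟩
    · intro i j hij
      by_cases hi : (i : ℕ) < m <;> by_cases hj : (j : ℕ) < m <;>
        simp only [hi, hj, dif_pos, dif_neg, not_false_iff] at hij
      · have := finj (hginj hij); exact Fin.ext (by simpa using congrArg Fin.val this)
      · exact absurd hij (hA _ (hgA _)).ne'
      · exact absurd hij (hA _ (hgA _)).ne
      · exact Fin.ext (by omega)
    · intro a b hab
      have hne : a ≠ b := hab.ne
      by_cases ha : (a : ℕ) < m <;> by_cases hb : (b : ℕ) < m <;>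
        simp only [ha, hb, dif_pos, dif_neg, not_false_iff]
      · refine fhom ?_
        show (⟨(a:ℕ), ha⟩ : Fin m) ≠ ⟨(b:ℕ), hb⟩
        intro hcon
        exact hne (Fin.ext (by simpa using congrArg Fin.val hcon))
      · exact (hA _ (hgA _)).symm
      · exact hA _ (hgA _)
      · exact absurd (Fin.ext (by omega : (a:ℕ) = b)) hne
  · right
    refine ⟨fun i => g (f i), fun a b hab => finj (hginj hab), ?_⟩
    intro a b hab
    have h2 := fhom hab
    rw [compl_adj] at h2 ⊢
    exact ⟨hginj.ne h2.1, h2.2⟩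

lemma ramseyClique : ∀ m p : ℕ, ∃ N : ℕ, ∀ R : SimpleGraph (Fin N),
    Copies (⊤ : SimpleGraph (Fin m)) R ∨ Copies (⊤ : SimpleGraph (Fin p)) Rᶜ := by
  intro m
  induction m with
  | zero => exact fun p => ⟨0, fun R => Or.inl (copies_top_zero R)⟩
  | succ m ihm =>
    intro p
    induction p with
    | zero => exact ⟨0, fun R => Or.inr (copies_top_zero Rᶜ)⟩
    | succ p ihp =>
      obtain ⟨N1, h1⟩ := ihm (p + 1)
      obtain ⟨N2, h2⟩ := ihp
      refine ⟨N1 + N2 + 1, fun R => ?_⟩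
      set v : Fin (N1 + N2 + 1) := Fin.last (N1 + N2) with hv
      set A : Finset (Fin (N1 + N2 + 1)) := Finset.univ.filter (fun u => R.Adj v u) with hA
      set B : Finset (Fin (N1 + N2 + 1)) :=
        Finset.univ.filter (fun u => u ≠ v ∧ ¬ R.Adj v u) with hB
      have hdisj : Disjoint A B := by
        rw [Finset.disjoint_left]
        intro u hu hu'
        simp only [hA, hB, Finset.mem_filter] at hu hu'
        exact hu'.2.2 hu.2
      have hunion : A ∪ B = Finset.univ.erase v := by
        ext u
        simp only [hA, hB, Finset.mem_union, Finset.mem_filter, Finset.mem_univ, true_and,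
          Finset.mem_erase, and_true]
        constructor
        · rintro (h | h)
          · exact h.ne'
          · exact h.1
        · intro h
          by_cases hadj : R.Adj v u
          · exact Or.inl hadj
          · exact Or.inr ⟨h, hadj⟩
      have hcard : A.card + B.card = N1 + N2 := by
        have := Finset.card_union_of_disjoint hdisj
        rw [hunion] at this
        simp only [Finset.card_erase_of_mem (Finset.mem_univ v), Finset.card_univ,
          Fintype.card_fin] at this
        omega
      rcases le_or_gt N1 A.card with hc | hc
      · exact ramsey_step R v A (fun u hu => (Finset.mem_filter.mp hu).2) hc h1
      · have hc2 : N2 ≤ B.card := by omega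
        have hBadj : ∀ u ∈ B, Rᶜ.Adj v u := by
          intro u hu
          simp only [hB, Finset.mem_filter] at hu
          exact ⟨Ne.symm hu.2.1, hu.2.2⟩
        have h2' : ∀ R' : SimpleGraph (Fin N2),
            Copies (⊤ : SimpleGraph (Fin p)) R' ∨ Copies (⊤ : SimpleGraph (Fin (m+1))) R'ᶜ := by
          intro R'
          rcases h2 R'ᶜ with h | h
          · right; exact h
          · left; rwa [compl_compl] at h
        rcases ramsey_step Rᶜ v B hBadj hc2 h2' with h | h
        · right; exact h
        · left; rwa [compl_compl] at h

lemma copies_of_copies_top {α : Type*} [Fintype α] (G : SimpleGraph α) {N : ℕ}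
    (R : SimpleGraph (Fin N))
    (hc : Copies (⊤ : SimpleGraph (Fin (Fintype.card α))) R) : Copies G R := by
  obtain ⟨f, finj, fhom⟩ := hc
  refine ⟨f ∘ (Fintype.equivFin α), finj.comp (Fintype.equivFin α).injective, ?_⟩
  intro a b hab
  exact fhom (fun hcon => hab.ne ((Fintype.equivFin α).injective hcon))

lemma ramseySetNonempty {α β : Type*} [Fintype α] [Fintype β]
    (G : SimpleGraph α) (H : SimpleGraph β) : {N | RamseyProp2 N G H}.Nonempty := by
  obtain ⟨N, hN⟩ := ramseyClique (Fintype.card α) (Fintype.card β)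
  exact ⟨N, fun R => (hN R).imp (copies_of_copies_top G R) (copies_of_copies_top H Rᶜ)⟩

lemma chrom_colorable {β : Type*} [Fintype β] (H : SimpleGraph β) : H.Colorable (chrom H) := by
  have hne : {k | H.Colorable k}.Nonempty := ⟨Fintype.card β, by exact H.colorable_of_fintype⟩
  exact Nat.sInf_mem hne

lemma surplus_pos {β : Type*} [Fintype β] (H : SimpleGraph β) (hχ : chrom H ≠ 0) :
    1 ≤ surplus H := by
  rw [Nat.one_le_iff_ne_zero]
  intro h0
  obtain ⟨C⟩ := chrom_colorable H
  have hi0 : (0 : ℕ) < chrom H := Nat.pos_of_ne_zero hχ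
  have hmem : 0 ∈ {s | ∃ C : H.Coloring (Fin (chrom H)), ∃ i : Fin (chrom H),
      s = (Finset.univ.filter (fun v => C v = i)).card} := by
    rcases Nat.sInf_eq_zero.mp h0 with hm | hem
    · exact hm
    · exfalso
      have : (Finset.univ.filter (fun v => C v = ⟨0, hi0⟩)).card
          ∈ (∅ : Set ℕ) := by
        rw [← hem]; exact ⟨C, ⟨0, hi0⟩, rfl⟩
      exact this
  obtain ⟨C', i, hCi⟩ := hmem
  have hempty : ∀ v : β, C' v ≠ i := by
    intro v hv
    have : v ∈ Finset.univ.filter (fun v => C' v = i) := Finset.mem_filter.mpr ⟨Finset.mem_univ _, hv⟩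
    rw [Finset.card_eq_zero.mp hCi.symm] at this
    exact absurd this (Finset.notMem_empty v)
  have hvi : ∀ v : β, ((C' v : ℕ) ≠ (i : ℕ)) := fun v hv => hempty v (Fin.ext hv)
  have hcol : H.Colorable (chrom H - 1) := by
    refine ⟨SimpleGraph.Coloring.mk
      (fun v => ⟨if ((C' v : ℕ)) < (i : ℕ) then (C' v : ℕ) else (C' v : ℕ) - 1, by
        have h1 := hvi v; have h2 := (C' v).isLt; have h3 := i.isLt
        split_ifs <;> omega⟩) ?_⟩
    intro a b hadj hcon
    have hab : (C' a : ℕ) ≠ (C' b : ℕ) := fun hh => C'.valid hadj (Fin.ext hh)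
    have hval := congrArg Fin.val hcon
    simp only [] at hval
    have ha := hvi a; have hb := hvi b
    have h2 := (C' a).isLt; have h3 := (C' b).isLt; have h4 := i.isLt
    split_ifs at hval <;> omega
  have := Nat.sInf_le (show chrom H - 1 ∈ {k | H.Colorable k} from hcol)
  change chrom H ≤ chrom H - 1 at this
  omega

theorem stmt3 {α β : Type*} [Fintype α] [Fintype β]
    (G : SimpleGraph α) (H : SimpleGraph β) (hconn : G.Connected)
    (h : surplus H ≤ Fintype.card α) :
    (Fintype.card α - 1) * (chrom H - 1) + surplus H ≤ ramsey2 G H := by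
  by_cases hχ0 : chrom H = 0
  · have hsurp : surplus H = 0 := by
      have hset : {s | ∃ C : H.Coloring (Fin (chrom H)), ∃ i : Fin (chrom H),
          s = (Finset.univ.filter (fun v => C v = i)).card} = ∅ := by
        ext s
        simp only [Set.mem_setOf_eq, Set.mem_empty_iff_false, iff_false]
        rintro ⟨C, i, -⟩
        exact absurd i.isLt (by omega)
      rw [surplus, hset, Nat.sInf_empty]
    rw [hχ0, hsurp]
    simp
  · have hs1 : 1 ≤ surplus H := surplus_pos H hχ0
    have hnα : Nonempty α := hconn.nonempty
    have hn1 : 1 ≤ Fintype.card α := Fintype.card_pos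
    refine le_csInf (ramseySetNonempty G H) ?_
    intro N hN
    by_contra hlt
    push_neg at hlt
    have hχ1 : 1 ≤ chrom H := Nat.pos_of_ne_zero hχ0
    -- the blocked construction
    set part : Fin N → Fin (chrom H) := fun i =>
      ⟨min ((i : ℕ) / (Fintype.card α - 1)) (chrom H - 1), by
        have := Nat.min_le_right ((i : ℕ) / (Fintype.card α - 1)) (chrom H - 1); omega⟩
      with hpart
    set lastj : Fin (chrom H) := ⟨chrom H - 1, by omega⟩ with hlastj
    have hmul : Fintype.card α = 1 → (Fintype.card α - 1) * (chrom H - 1) = 0 := by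
      intro hn1'; rw [hn1']; simp
    have hN0 : Fintype.card α = 1 → N = 0 := by
      intro hnn; have := hmul hnn; omega
    have hge : ∀ u : Fin N, part u = lastj →
        (chrom H - 1) * (Fintype.card α - 1) ≤ (u : ℕ) := by
      intro u hu
      have hv : min ((u : ℕ) / (Fintype.card α - 1)) (chrom H - 1) = (lastj : ℕ) :=
        congrArg Fin.val hu
      have hlv : (lastj : ℕ) = chrom H - 1 := rfl
      have hdiv : chrom H - 1 ≤ (u : ℕ) / (Fintype.card α - 1) := by omega
      calc (chrom H - 1) * (Fintype.card α - 1)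
          ≤ ((u : ℕ) / (Fintype.card α - 1)) * (Fintype.card α - 1) :=
            Nat.mul_le_mul_right _ hdiv
        _ ≤ (u : ℕ) := Nat.div_mul_le_self _ _
    have hcomm : (Fintype.card α - 1) * (chrom H - 1) = (chrom H - 1) * (Fintype.card α - 1) :=
      Nat.mul_comm _ _
    -- cardinality of the last block
    have hlast : (Finset.univ.filter (fun u : Fin N => part u = lastj)).card ≤ surplus H - 1 := by
      have := Finset.card_le_card_of_injOn
        (fun u : Fin N => (u : ℕ) - (chrom H - 1) * (Fintype.card α - 1))
        (s := Finset.univ.filter (fun u : Fin N => part u = lastj))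
        (t := Finset.range (surplus H - 1)) ?_ ?_
      · simpa using this
      · intro u hu
        simp only [Finset.mem_coe, Finset.mem_filter, Finset.mem_univ, true_and] at hu
        have h1 := hge u hu
        have hub : (u : ℕ) < N := u.isLt
        simp only [Finset.mem_coe, Finset.mem_range]
        show (u : ℕ) - (chrom H - 1) * (Fintype.card α - 1) < surplus H - 1
        omega
      · intro u1 hu1 u2 hu2 heq
        simp only [Finset.coe_filter, Set.mem_setOf_eq, Finset.mem_univ, true_and] at hu1 hu2
        have h1 := hge u1 hu1
        have h2 := hge u2 hu2
        have heq' : (u1 : ℕ) - (chrom H - 1) * (Fintype.card α - 1)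
            = (u2 : ℕ) - (chrom H - 1) * (Fintype.card α - 1) := heq
        exact Fin.ext (by omega)
    -- cardinality of every block
    have hblock : ∀ j : Fin (chrom H),
        (Finset.univ.filter (fun u : Fin N => part u = j)).card ≤ Fintype.card α - 1 := by
      intro j
      rcases Nat.lt_or_ge (j : ℕ) (chrom H - 1) with hj | hj
      · rcases Nat.lt_or_ge (Fintype.card α) 2 with h2 | h2
        · have hN0' := hN0 (by omega)
          have : (Finset.univ.filter (fun u : Fin N => part u = j)) = ∅ := by
            ext u; exact absurd u.isLt (by omega)
          rw [this]; simp
        · have := Finset.card_le_card_of_injOn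
            (fun u : Fin N => (u : ℕ) % (Fintype.card α - 1))
            (s := Finset.univ.filter (fun u : Fin N => part u = j))
            (t := Finset.range (Fintype.card α - 1))
            (fun u hu => Finset.mem_range.mpr (Nat.mod_lt _ (by omega))) ?_
          · simpa using this
          · intro u1 hu1 u2 hu2 hmod
            simp only [Finset.coe_filter, Set.mem_setOf_eq, Finset.mem_univ, true_and] at hu1 hu2
            have hv1 : min ((u1 : ℕ) / (Fintype.card α - 1)) (chrom H - 1) = (j : ℕ) :=
              congrArg Fin.val hu1
            have hv2 : min ((u2 : ℕ) / (Fintype.card α - 1)) (chrom H - 1) = (j : ℕ) :=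
              congrArg Fin.val hu2
            have hd1 : (u1 : ℕ) / (Fintype.card α - 1) = (j : ℕ) := by omega
            have hd2 : (u2 : ℕ) / (Fintype.card α - 1) = (j : ℕ) := by omega
            have e1 := Nat.div_add_mod (u1 : ℕ) (Fintype.card α - 1)
            have e2 := Nat.div_add_mod (u2 : ℕ) (Fintype.card α - 1)
            have hmod' : (u1 : ℕ) % (Fintype.card α - 1) = (u2 : ℕ) % (Fintype.card α - 1) := hmod
            apply Fin.ext
            rw [← e1, ← e2, hd1, hd2, hmod']
      · have hjeq : j = lastj := Fin.ext (by have := j.isLt; have : (lastj : ℕ) = chrom H - 1 := rfl; omega)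
        rw [hjeq]
        exact hlast.trans (by omega)
    -- apply the Ramsey property to the blocked graph
    set Rr : SimpleGraph (Fin N) := SimpleGraph.fromRel (fun u v => part u = part v) with hRr
    rcases hN Rr with ⟨f, finj, fhom⟩ | ⟨f, finj, fhom⟩
    · -- red copy of G : impossible since G is connected on card α vertices
      have key : ∀ {a b : α}, G.Adj a b → part (f a) = part (f b) := by
        intro a b hab
        have := fhom hab
        rw [hRr, SimpleGraph.fromRel_adj] at this
        rcases this.2 with h' | h'
        · exact h'
        · exact h'.symm
      have hsame : ∀ a b : α, part (f a) = part (f b) := by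
        intro a b
        obtain ⟨w⟩ := hconn a b
        induction w with
        | nil => rfl
        | cons hadj p ih => exact (key hadj).trans ih
      obtain ⟨a0⟩ := hnα
      have hcard := Finset.card_le_card_of_injOn f
        (s := (Finset.univ : Finset α))
        (t := Finset.univ.filter (fun u : Fin N => part u = part (f a0)))
        (fun a _ => Finset.mem_filter.mpr ⟨Finset.mem_univ _, hsame a a0⟩)
        (fun a _ b _ hh => finj hh)
      rw [Finset.card_univ] at hcard
      have := hblock (part (f a0))
      omega
    · -- blue copy of H : impossible by the surplus bound
      have hvalid : ∀ {a b : β}, H.Adj a b → part (f a) ≠ part (f b) := by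
        intro a b hab heq
        have := fhom hab
        rw [SimpleGraph.compl_adj, hRr, SimpleGraph.fromRel_adj] at this
        exact this.2 ⟨this.1, Or.inl heq⟩
      set C : H.Coloring (Fin (chrom H)) := SimpleGraph.Coloring.mk (fun v => part (f v)) hvalid
        with hC
      have hle : surplus H ≤ (Finset.univ.filter (fun v : β => C v = lastj)).card :=
        Nat.sInf_le ⟨C, lastj, rfl⟩
      have hcard := Finset.card_le_card_of_injOn f
        (s := Finset.univ.filter (fun v : β => C v = lastj))
        (t := Finset.univ.filter (fun u : Fin N => part u = lastj))
        (fun v hv => Finset.mem_filter.mpr ⟨Finset.mem_univ _,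
          (Finset.mem_filter.mp hv).2⟩)
        (fun a _ b _ hh => finj hh)
      omega
end

section
/- For every tree T on n vertices and every m ≥ 1, the Ramsey number satisfies r(T, K_m) = (n−1)(m−1) + 1. -/
open SimpleGraph
open scoped Classical

-- helper: greedy independent set in degenerate graph
private lemma indep_lemma {N : ℕ} (G : SimpleGraph (Fin N)) (d : ℕ)
    (hno : ∀ S : Finset (Fin N), S.Nonempty → ∃ x ∈ S, (S.filter (G.Adj x)).card < d) :
    ∀ S : Finset (Fin N), ∃ I ⊆ S, (∀ a ∈ I, ∀ b ∈ I, a ≠ b → ¬ G.Adj a b) ∧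
      S.card ≤ d * I.card := by
  intro S
  induction S using Finset.strongInduction with
  | _ S ih =>
  by_cases hS : S.Nonempty
  · obtain ⟨x, hxS, hxd⟩ := hno S hS
    set B : Finset (Fin N) := insert x (S.filter (G.Adj x)) with hB
    set S' : Finset (Fin N) := S \ B with hS'
    have hxB : x ∈ B := Finset.mem_insert_self _ _
    have hssub : S' ⊂ S := by
      refine Finset.ssubset_iff_of_subset (Finset.sdiff_subset) |>.2 ⟨x, hxS, ?_⟩
      simp [hS', hxB]
    obtain ⟨I', hI'sub, hindep, hcard⟩ := ih S' hssub
    refine ⟨insert x I', ?_, ?_, ?_⟩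
    · intro a ha
      rcases Finset.mem_insert.1 ha with rfl | ha
      · exact hxS
      · exact Finset.sdiff_subset (hI'sub ha)
    · have key : ∀ b ∈ I', ¬ G.Adj x b := by
        intro b hb hadj
        have hb' : b ∈ S' := hI'sub hb
        exact (Finset.mem_sdiff.1 hb').2
          (Finset.mem_insert_of_mem (Finset.mem_filter.2 ⟨(Finset.mem_sdiff.1 hb').1, hadj⟩))
      intro a ha b hb hab
      rcases Finset.mem_insert.1 ha with ha' | ha' <;> rcases Finset.mem_insert.1 hb with hb' | hb'
      · exact absurd (ha'.trans hb'.symm) hab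
      · exact ha' ▸ key b hb'
      · exact hb' ▸ fun hadj => key a ha' hadj.symm
      · exact hindep a ha' b hb' hab
    · have hxI' : x ∉ I' := by
        intro hx
        have := Finset.mem_sdiff.1 (hI'sub hx)
        exact this.2 hxB
      rw [Finset.card_insert_of_notMem hxI', Nat.mul_add, Nat.mul_one]
      have hBcard : B.card ≤ d := by
        rw [hB]
        have := Finset.card_insert_le x (S.filter (G.Adj x))
        omega
      have hScard : S.card ≤ S'.card + B.card := by
        have hsub : S ⊆ S' ∪ B := by
          intro a ha
          by_cases h : a ∈ B
          · exact Finset.mem_union_right _ h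
          · exact Finset.mem_union_left _ (Finset.mem_sdiff.2 ⟨ha, h⟩)
        calc S.card ≤ (S' ∪ B).card := Finset.card_le_card hsub
          _ ≤ S'.card + B.card := Finset.card_union_le _ _
      omega
  · rw [Finset.not_nonempty_iff_eq_empty] at hS
    subst hS
    exact ⟨∅, Finset.Subset.refl _, by simp, by simp⟩

private lemma exists_leaf {V : Type} [Fintype V] {T : SimpleGraph V} (hT : T.IsTree)
    (h2 : 2 ≤ Fintype.card V) : ∃ v, T.degree v = 1 := by
  by_contra h
  push_neg at h
  have hdeg : ∀ v : V, 2 ≤ T.degree v := by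
    intro v
    have h1 : 0 < T.degree v := by
      rw [SimpleGraph.degree_pos_iff_exists_adj]
      obtain ⟨w, hw⟩ := Fintype.exists_ne_of_one_lt_card h2 v
      obtain ⟨p⟩ := hT.isConnected.preconnected v w
      cases p with
      | nil => exact absurd rfl hw
      | cons hadj q => exact ⟨_, hadj⟩
    have := h v
    omega
  have hsum := SimpleGraph.sum_degrees_eq_twice_card_edges T
  have hedge := hT.card_edgeFinset
  have hge : 2 * Fintype.card V ≤ ∑ v, T.degree v := by
    calc 2 * Fintype.card V = ∑ _v : V, 2 := by
          simp [Finset.sum_const, Finset.card_univ, mul_comm]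
      _ ≤ _ := Finset.sum_le_sum fun i _ => hdeg i
  omega

private lemma walk_transfer {V : Type} {T : SimpleGraph V} {v : V} :
    ∀ {a b : V} (p : T.Walk a b), (∀ x ∈ p.support, x ≠ v) → ∀ (ha : a ≠ v) (hb : b ≠ v),
    (T.comap (Subtype.val : {x : V // x ≠ v} → V)).Reachable ⟨a, ha⟩ ⟨b, hb⟩ := by
  intro a b p
  induction p with
  | nil => intro _ ha hb; rfl
  | @cons a c b hadj q ih =>
    intro hp ha hb
    have hc : c ≠ v := hp c (by simp)
    have h1 : (T.comap (Subtype.val : {x : V // x ≠ v} → V)).Adj ⟨a, ha⟩ ⟨c, hc⟩ := hadj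
    exact h1.reachable.trans (ih (fun x hx => hp x (by simp [hx])) hc hb)

private lemma path_avoids_leaf {V : Type} {T : SimpleGraph V} [Fintype V] {v u : V}
    (hnbr : T.neighborFinset v = {u}) {a b : V} (p : T.Walk a b) (hp : p.IsPath)
    (ha : a ≠ v) (hb : b ≠ v) : v ∉ p.support := by
  intro hv
  have hspec := p.take_spec hv
  set p1 := p.takeUntil v hv with hp1
  set p2 := p.dropUntil v hv with hp2
  -- u is in p1.support
  have hu1 : u ∈ p1.support := by
    cases hr : p1.reverse with
    | nil => exact absurd rfl ha
    | @cons _ c _ hadj q =>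
      have hcu : c = u := by
        have : c ∈ T.neighborFinset v := by
          rw [SimpleGraph.mem_neighborFinset]; exact hadj
        rw [hnbr] at this
        simpa using this
      have : c ∈ p1.reverse.support := by rw [hr]; simp
      rw [Walk.support_reverse, List.mem_reverse] at this
      rwa [hcu] at this
  have hu2 : u ∈ p2.support.tail := by
    cases hr : p2 with
    | nil => exact absurd rfl hb
    | @cons _ c _ hadj q =>
      have hcu : c = u := by
        have : c ∈ T.neighborFinset v := by
          rw [SimpleGraph.mem_neighborFinset]; exact hadj
        rw [hnbr] at this
        simpa using this
      simp only [Walk.support_cons, List.tail_cons]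
      rw [← hcu]
      exact q.start_mem_support
  have hnodup := hp.support_nodup
  rw [← hspec, Walk.support_append] at hnodup
  exact (List.disjoint_of_nodup_append hnodup) hu1 hu2

private lemma leaf_delete_tree {V : Type} [Fintype V] {T : SimpleGraph V} {v u : V}
    (hT : T.IsTree) (hnbr : T.neighborFinset v = {u}) (h2 : 2 ≤ Fintype.card V) :
    (T.comap (Subtype.val : {x : V // x ≠ v} → V)).IsTree := by
  constructor
  · rw [SimpleGraph.connected_iff]
    constructor
    · rintro ⟨a, ha⟩ ⟨b, hb⟩
      obtain ⟨w⟩ := hT.isConnected.preconnected a b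
      have hpath := w.toPath.2
      have havoid : v ∉ (w.toPath : T.Walk a b).support :=
        path_avoids_leaf hnbr _ hpath ha hb
      exact walk_transfer (w.toPath : T.Walk a b) (fun x hx hxv => havoid (by rwa [hxv] at hx)) ha hb
    · have hu : u ≠ v := by
        have : u ∈ T.neighborFinset v := by rw [hnbr]; simp
        rw [SimpleGraph.mem_neighborFinset] at this
        exact this.ne'
      exact ⟨⟨u, hu⟩⟩
  · intro w c hc
    have hmapc : ((c.map (SimpleGraph.Hom.comap Subtype.val T)).IsCycle) :=
      (Walk.map_isCycle_iff_of_injective Subtype.val_injective).2 hc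
    exact hT.IsAcyclic _ hmapc

private lemma tree_embed : ∀ (k : ℕ) (V : Type) [Fintype V] (T : SimpleGraph V),
    T.IsTree → Fintype.card V = k → ∀ {N : ℕ} (G : SimpleGraph (Fin N)) (S : Finset (Fin N)),
    S.Nonempty → (∀ x ∈ S, k - 1 ≤ (S.filter (G.Adj x)).card) →
    ∃ f : V → Fin N, Function.Injective f ∧ (∀ a, f a ∈ S) ∧
      ∀ a b, T.Adj a b → G.Adj (f a) (f b) := by
  intro k
  induction k using Nat.strong_induction_on with
  | _ k ih =>
  intro V _ T hT hcard N G S hS hdeg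
  have hpos : 1 ≤ k := by
    rw [← hcard]
    exact Fintype.card_pos_iff.2 hT.isConnected.nonempty
  by_cases h2 : 2 ≤ k
  · -- find a leaf
    obtain ⟨v, hv⟩ := exists_leaf hT (hcard ▸ h2)
    obtain ⟨u, hnbr⟩ := Finset.card_eq_one.1 (by rwa [SimpleGraph.degree] at hv)
    have hadj_vu : T.Adj v u := by
      rw [← SimpleGraph.mem_neighborFinset, hnbr]; simp
    have hu : u ≠ v := hadj_vu.ne'
    have hT' := leaf_delete_tree hT hnbr (hcard ▸ h2)
    have hcard' : Fintype.card {x : V // x ≠ v} = k - 1 := by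
      rw [Fintype.card_subtype_compl, Fintype.card_subtype_eq, hcard]
    obtain ⟨f', hinj', hmem', hadj'⟩ := ih (k-1) (by omega) _ _ hT' hcard' G S hS
      (fun x hx => le_trans (by omega) (hdeg x hx))
    set x₀ := f' ⟨u, hu⟩ with hx₀
    set img : Finset (Fin N) := Finset.univ.image f' with himg
    have himgcard : img.card = k - 1 := by
      rw [himg, Finset.card_image_of_injective _ hinj', Finset.card_univ, hcard']
    have hx₀img : x₀ ∈ img := by rw [himg]; exact Finset.mem_image_of_mem _ (Finset.mem_univ _)
    set A : Finset (Fin N) := S.filter (G.Adj x₀) with hA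
    have hAcard : k - 1 ≤ A.card := hdeg x₀ (hmem' _)
    have hx₀A : x₀ ∉ A := by
      rw [hA]; simp [SimpleGraph.irrefl]
    have hne : (A \ img).Nonempty := by
      rw [← Finset.card_pos]
      have hsub : A ⊆ (A \ img) ∪ img.erase x₀ := by
        intro a ha
        by_cases h : a ∈ img
        · refine Finset.mem_union_right _ (Finset.mem_erase.2 ⟨?_, h⟩)
          intro he; exact hx₀A (he ▸ ha)
        · exact Finset.mem_union_left _ (Finset.mem_sdiff.2 ⟨ha, h⟩)
      have h1 : A.card ≤ (A \ img).card + (img.erase x₀).card :=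
        le_trans (Finset.card_le_card hsub) (Finset.card_union_le _ _)
      have h2' : (img.erase x₀).card = k - 2 := by
        rw [Finset.card_erase_of_mem hx₀img, himgcard]
        omega
      omega
    obtain ⟨w, hw⟩ := hne
    rw [Finset.mem_sdiff] at hw
    obtain ⟨hwA, hwimg⟩ := hw
    rw [hA, Finset.mem_filter] at hwA
    obtain ⟨hwS, hwadj⟩ := hwA
    classical
    set f : V → Fin N := fun a => if h : a = v then w else f' ⟨a, h⟩ with hf
    have hfv : f v = w := by simp [hf]
    have hfn : ∀ (a : V) (h : a ≠ v), f a = f' ⟨a, h⟩ := fun a h => dif_neg h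
    refine ⟨f, ?_, ?_, ?_⟩
    · intro a b hab
      by_cases ha : a = v <;> by_cases hb : b = v
      · rw [ha, hb]
      · rw [ha, hfv, hfn b hb] at hab
        exact absurd (hab ▸ Finset.mem_image_of_mem f' (Finset.mem_univ (⟨b, hb⟩ : {x : V // x ≠ v}))) hwimg
      · rw [hb, hfv, hfn a ha] at hab
        exact absurd (hab ▸ Finset.mem_image_of_mem f' (Finset.mem_univ (⟨a, ha⟩ : {x : V // x ≠ v}))) hwimg
      · rw [hfn a ha, hfn b hb] at hab
        have := hinj' hab
        rw [Subtype.mk.injEq] at this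
        exact this
    · intro a
      by_cases ha : a = v
      · rw [ha, hfv]; exact hwS
      · rw [hfn a ha]; exact hmem' _
    · intro a b hab
      by_cases ha : a = v <;> by_cases hb : b = v
      · exact absurd (ha.trans hb.symm) hab.ne
      · have hbu : b = u := by
          have hmem : b ∈ T.neighborFinset v := by
            rw [SimpleGraph.mem_neighborFinset]; exact ha ▸ hab
          rw [hnbr] at hmem; simpa using hmem
        have h1 : f a = w := by rw [ha, hfv]
        have h2 : f b = x₀ := by
          rw [hfn b hb, hx₀]; congr 1; exact Subtype.ext hbu
        rw [h1, h2]; exact hwadj.symm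
      · have hau : a = u := by
          have hmem : a ∈ T.neighborFinset v := by
            rw [SimpleGraph.mem_neighborFinset]; exact hb ▸ hab.symm
          rw [hnbr] at hmem; simpa using hmem
        have h1 : f b = w := by rw [hb, hfv]
        have h2 : f a = x₀ := by
          rw [hfn a ha, hx₀]; congr 1; exact Subtype.ext hau
        rw [h1, h2]; exact hwadj
      · rw [hfn a ha, hfn b hb]
        exact hadj' ⟨a, ha⟩ ⟨b, hb⟩ hab
  · -- k = 1
    have hk1 : k = 1 := by omega
    have : Fintype.card V ≤ 1 := by omega
    have hsub : Subsingleton V := Fintype.card_le_one_iff_subsingleton.1 this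
    obtain ⟨s, hs⟩ := hS
    refine ⟨fun _ => s, fun a b _ => Subsingleton.elim a b, fun _ => hs, ?_⟩
    intro a b hab
    exact absurd (Subsingleton.elim a b) hab.ne

private lemma ramsey_upper (n m : ℕ) (T : SimpleGraph (Fin n)) (hT : T.IsTree) :
    RamseyProp2 ((n-1)*(m-1)+1) T (⊤ : SimpleGraph (Fin m)) := by
  intro R
  by_cases hex : ∃ S : Finset (Fin ((n-1)*(m-1)+1)), S.Nonempty ∧ ∀ x ∈ S, n - 1 ≤ (S.filter (R.Adj x)).card
  · left
    obtain ⟨S, hS, hdeg⟩ := hex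
    obtain ⟨f, h1, _h2, h3⟩ := tree_embed n (Fin n) T hT (by simp) R S hS hdeg
    exact ⟨f, h1, fun a b h => h3 a b h⟩
  · right
    push_neg at hex
    have hex' : ∀ S : Finset (Fin ((n-1)*(m-1)+1)), S.Nonempty → ∃ x ∈ S, (S.filter (R.Adj x)).card < n - 1 := by
      intro S hS
      obtain ⟨x, hx1, hx2⟩ := hex S hS
      exact ⟨x, hx1, by omega⟩
    have hn1 : 1 ≤ n - 1 := by
      obtain ⟨x, -, hx⟩ := hex' {⟨0, by omega⟩} ⟨_, Finset.mem_singleton_self _⟩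
      omega
    obtain ⟨I, _hIsub, hindep, hcard⟩ := indep_lemma R (n-1) hex' Finset.univ
    have hcard' : (n-1)*(m-1)+1 ≤ (n-1) * I.card := by
      simpa using hcard
    have hIm : m ≤ I.card := by
      rcases Nat.lt_or_ge I.card m with h | h
      · exfalso
        have : (n-1) * I.card ≤ (n-1)*(m-1) := Nat.mul_le_mul_left _ (by omega)
        omega
      · exact h
    have hcards : Fintype.card (Fin m) ≤ Fintype.card I := by
      simpa [Fintype.card_coe] using hIm
    obtain ⟨e⟩ := Function.Embedding.nonempty_of_card_le hcards
    refine ⟨fun i => (e i : Fin ((n-1)*(m-1)+1)), ?_, ?_⟩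
    · exact Subtype.val_injective.comp e.injective
    · intro i j hij
      have hne : i ≠ j := hij.ne
      have hne' : (e i : Fin ((n-1)*(m-1)+1)) ≠ (e j : Fin ((n-1)*(m-1)+1)) :=
        fun h => hne (e.injective (Subtype.ext h))
      rw [SimpleGraph.compl_adj]
      exact ⟨hne', hindep _ (e i).2 _ (e j).2 hne'⟩

private lemma ramsey_lower (n m N : ℕ) (hm : 1 ≤ m) (T : SimpleGraph (Fin n)) (hT : T.IsTree)
    (hN : N ≤ (n-1)*(m-1)) : ¬ RamseyProp2 N T (⊤ : SimpleGraph (Fin m)) := by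
  have hn : 1 ≤ n := by
    have := hT.isConnected.nonempty
    exact Fin.pos_iff_nonempty.2 this
  rcases Nat.eq_zero_or_pos N with rfl | hN0
  · intro h
    rcases h ⊥ with ⟨f, -, -⟩ | ⟨f, -, -⟩
    · exact (f ⟨0, hn⟩).elim0
    · exact (f ⟨0, hm⟩).elim0
  · have hnm : 1 ≤ (n-1)*(m-1) := le_trans hN0 hN
    have h2n : 2 ≤ n := by
      rcases Nat.eq_or_lt_of_le hn with h | h
      · exfalso; rw [← h] at hnm; simp at hnm
      · omega
    have h2m : 2 ≤ m := by
      rcases Nat.eq_or_lt_of_le hm with h | h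
      · exfalso; rw [← h] at hnm; simp at hnm
      · omega
    intro h
    set R : SimpleGraph (Fin N) :=
      SimpleGraph.fromRel (fun a b => (a : ℕ)/(n-1) = (b : ℕ)/(n-1)) with hR
    rcases h R with ⟨f, hinj, hadj⟩ | ⟨f, hinj, hadj⟩
    · -- red copy of T impossible
      have key : ∀ a b : Fin n, ((f a : ℕ))/(n-1) = ((f b : ℕ))/(n-1) := by
        intro a b
        obtain ⟨p⟩ := hT.isConnected.preconnected a b
        induction p with
        | nil => rfl
        | @cons a c b hadj' q ih =>
          have hr : R.Adj (f a) (f c) := hadj hadj'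
          rw [hR, SimpleGraph.fromRel_adj] at hr
          rcases hr.2 with h' | h'
          · exact h'.trans ih
          · exact h'.symm.trans ih
      have ginj : Function.Injective
          (fun a : Fin n => (⟨(f a : ℕ) % (n-1), Nat.mod_lt _ (by omega)⟩ : Fin (n-1))) := by
        intro a b hab
        apply hinj
        apply Fin.ext
        have h1 := key a b
        have h2 : (f a : ℕ) % (n-1) = (f b : ℕ) % (n-1) := by
          simpa [Fin.mk.injEq] using hab
        calc (f a : ℕ) = (n-1) * ((f a : ℕ)/(n-1)) + (f a : ℕ) % (n-1) :=
              (Nat.div_add_mod _ _).symm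
          _ = (n-1) * ((f b : ℕ)/(n-1)) + (f b : ℕ) % (n-1) := by rw [h1, h2]
          _ = (f b : ℕ) := Nat.div_add_mod _ _
      have := Fintype.card_le_of_injective _ ginj
      simp at this
      omega
    · -- blue K_m impossible
      have hdivlt : ∀ i : Fin m, (f i : ℕ)/(n-1) < m - 1 := by
        intro i
        rw [Nat.div_lt_iff_lt_mul (by omega : 0 < n - 1)]
        have : (f i : ℕ) < N := (f i).2
        calc (f i : ℕ) < N := this
          _ ≤ (n-1)*(m-1) := hN
          _ = (m-1)*(n-1) := Nat.mul_comm _ _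
      have ginj : Function.Injective
          (fun i : Fin m => (⟨(f i : ℕ)/(n-1), hdivlt i⟩ : Fin (m-1))) := by
        intro i j hij
        by_contra hne
        have htop : (⊤ : SimpleGraph (Fin m)).Adj i j := by
          simp [hne]
        have hc := hadj htop
        rw [SimpleGraph.compl_adj] at hc
        have hdiv : (f i : ℕ)/(n-1) = (f j : ℕ)/(n-1) := by
          simpa [Fin.mk.injEq] using hij
        apply hc.2
        rw [hR, SimpleGraph.fromRel_adj]
        exact ⟨hc.1, Or.inl hdiv⟩
      have := Fintype.card_le_of_injective _ ginj
      simp at this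
      omega

theorem stmt4 (n m : ℕ) (hm : 1 ≤ m) (T : SimpleGraph (Fin n)) (hT : T.IsTree) :
    ramsey2 T (⊤ : SimpleGraph (Fin m)) = (n - 1) * (m - 1) + 1 := by
  have hup := ramsey_upper n m T hT
  unfold ramsey2
  refine le_antisymm (Nat.sInf_le hup) (le_csInf ⟨_, hup⟩ ?_)
  intro N hN
  by_contra hlt
  push_neg at hlt
  exact ramsey_lower n m N hm T hT (by omega) hN
end

section
/- If ℓ = t(n−1) + 1 for a non-negative integer t and n ≥ 2, then for every tree T on n vertices, the 2-color Ramsey number satisfies r(K_{1,ℓ}, T) = ℓ + n − 1. -/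
open SimpleGraph
open scoped Classical

open Finset

section Aux

lemma ncard_neighborSet_eq_degree {V : Type*} {G : SimpleGraph V} (v : V)
    [Fintype (G.neighborSet v)] : (G.neighborSet v).ncard = G.degree v := by
  rw [← Nat.card_coe_set_eq, Nat.card_eq_fintype_card, card_neighborSet_eq_degree]


lemma walk_crossing {V : Type*} {G : SimpleGraph V} {s : Set V} :
    ∀ {x y : V}, G.Walk x y → x ∈ s → y ∉ s → ∃ a b, a ∈ s ∧ b ∉ s ∧ G.Adj a b := by
  intro x y p
  induction p with
  | nil => intro hx hy; exact absurd hx hy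
  | @cons u v w h p ih =>
    intro hx hy
    by_cases hv : v ∈ s
    · exact ih hv hy
    · exact ⟨u, v, hx, hv, h⟩

lemma walk_const {V W : Type*} {G : SimpleGraph V} {F : V → W}
    (h : ∀ a b, G.Adj a b → F a = F b) :
    ∀ {x y : V}, G.Walk x y → F x = F y := by
  intro x y p; induction p with
  | nil => rfl
  | cons hadj _ ih => rw [h _ _ hadj]; exact ih

lemma filter_lt_card {n k : ℕ} (hk : k ≤ n) :
    (univ.filter fun i : Fin n => (i : ℕ) < k).card = k := by
  have : (univ.filter fun i : Fin n => (i : ℕ) < k)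
      = (Finset.range k).attachFin (fun m hm => lt_of_lt_of_le (Finset.mem_range.1 hm) hk) := by
    ext a; simp [Finset.mem_attachFin]
  rw [this, Finset.card_attachFin, Finset.card_range]

lemma exists_bfs_order {n : ℕ} (T : SimpleGraph (Fin n)) (hc : T.Connected) (hn : 0 < n) :
    ∃ w : Fin n → Fin n, Function.Bijective w ∧
      ∀ i : Fin n, 0 < (i : ℕ) → ∃ j, j < i ∧ T.Adj (w j) (w i) := by
  have key : ∀ k, 1 ≤ k → k ≤ n → ∃ w : Fin n → Fin n,
      Set.InjOn w {i : Fin n | (i : ℕ) < k} ∧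
      ∀ i : Fin n, 0 < (i : ℕ) → (i : ℕ) < k → ∃ j, j < i ∧ T.Adj (w j) (w i) := by
    intro k
    induction k with
    | zero => omega
    | succ k ih =>
      intro _ hkn
      by_cases hk1 : k = 0
      · subst hk1
        refine ⟨id, ?_, by omega⟩
        intro a ha b hb _
        simp only [Set.mem_setOf_eq] at ha hb
        exact Fin.ext (by omega)
      · obtain ⟨w, hw1, hw2⟩ := ih (by omega) (by omega)
        -- s = image of first k
        set s : Finset (Fin n) := (univ.filter fun i : Fin n => (i : ℕ) < k).image w with hs
        have hscard : s.card = k := by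
          rw [hs, Finset.card_image_of_injOn, filter_lt_card (by omega)]
          intro a ha b hb
          exact hw1 (by simpa using ha) (by simpa using hb)
        have hx0 : w ⟨0, hn⟩ ∈ s := by
          rw [hs]; exact Finset.mem_image_of_mem w (by simp; omega)
        have hyex : ∃ y, y ∉ s := by
          by_contra hcon
          push_neg at hcon
          have : (univ : Finset (Fin n)).card ≤ s.card :=
            Finset.card_le_card (fun y _ => hcon y)
          simp [hscard] at this; omega
        obtain ⟨y, hy⟩ := hyex
        obtain ⟨p⟩ := hc.preconnected (w ⟨0, hn⟩) y
        obtain ⟨a, b, ha, hb, hab⟩ := walk_crossing (s := (↑s : Set (Fin n))) p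
          (by exact hx0) (by simpa using hy)
        obtain ⟨j, hjmem, hja⟩ := Finset.mem_image.1 ha
        have hjk : (j : ℕ) < k := by simpa using hjmem
        refine ⟨fun i => if (i : ℕ) = k then b else w i, ?_, ?_⟩
        · intro x hx y' hy'
          simp only [Set.mem_setOf_eq] at hx hy'
          intro h
          dsimp only at h
          by_cases hxk : (x : ℕ) = k <;> by_cases hyk : (y' : ℕ) = k
          · exact Fin.ext (by omega)
          · rw [if_pos hxk, if_neg hyk] at h
            exfalso; apply hb
            rw [h]; exact Finset.mem_image_of_mem w (by simp; omega)
          · rw [if_neg hxk, if_pos hyk] at h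
            exfalso; apply hb
            rw [← h]; exact Finset.mem_image_of_mem w (by simp; omega)
          · rw [if_neg hxk, if_neg hyk] at h
            exact hw1 (by simp; omega) (by simp; omega) h
        · intro i hi0 hik
          by_cases hik' : (i : ℕ) = k
          · refine ⟨j, by omega, ?_⟩
            have h1 : ((j : ℕ)) ≠ k := by omega
            dsimp only
            rw [if_neg h1, hik', if_pos rfl, hja]; exact hab
          · obtain ⟨j', hj', hadj⟩ := hw2 i hi0 (by omega)
            refine ⟨j', hj', ?_⟩
            have h1 : ((j' : ℕ)) ≠ k := by omega
            have h2 : ((i : ℕ)) ≠ k := hik'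
            dsimp only
            rw [if_neg h1, if_neg h2]
            exact hadj
  obtain ⟨w, hw1, hw2⟩ := key n hn le_rfl
  refine ⟨w, ?_, fun i hi => hw2 i hi i.2⟩
  have : Function.Injective w := fun a b h => hw1 (by simp [a.2]) (by simp [b.2]) h
  exact (Finite.injective_iff_bijective).1 this

lemma parent_unique {n : ℕ} (S : SimpleGraph (Fin n))
    (hE : S.edgeFinset.card = n - 1)
    (h1 : ∀ i : Fin n, 0 < (i : ℕ) → ∃ j, j < i ∧ S.Adj j i) :
    ∀ i : Fin n, 0 < (i : ℕ) → (univ.filter fun j => j < i ∧ S.Adj j i).card = 1 := by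
  classical
  set d : Fin n → ℕ := fun i => (univ.filter fun j => j < i ∧ S.Adj j i).card with hd
  set P : Finset (Fin n × Fin n) :=
    univ.filter (fun p : Fin n × Fin n => p.1 < p.2 ∧ S.Adj p.1 p.2) with hP
  have hPcard : P.card = S.edgeFinset.card := by
    apply Finset.card_bij (fun (p : Fin n × Fin n) _ => s(p.1, p.2))
    · intro p hp
      rw [hP, Finset.mem_filter] at hp
      exact mem_edgeFinset.2 hp.2.2
    · intro p hp q hq h
      rw [hP, Finset.mem_filter] at hp hq
      rw [Sym2.eq_iff] at h
      rcases h with ⟨h1', h2'⟩ | ⟨h1', h2'⟩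
      · exact Prod.ext h1' h2'
      · exfalso
        have hlt := hp.2.1
        rw [h1', h2'] at hlt
        exact absurd hq.2.1 (not_lt.2 hlt.le)
    · intro e he
      rw [SimpleGraph.mem_edgeFinset] at he
      induction e using Sym2.ind with
      | _ a b =>
        have hab : S.Adj a b := he
        rcases lt_trichotomy a b with h | h | h
        · exact ⟨(a, b), by rw [hP, Finset.mem_filter]; exact ⟨Finset.mem_univ _, h, hab⟩, rfl⟩
        · exact absurd h (by simpa using hab.ne)
        · exact ⟨(b, a), by rw [hP, Finset.mem_filter]; exact ⟨Finset.mem_univ _, h, hab.symm⟩,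
            Sym2.eq_swap⟩
  have hfib : P.card = ∑ i : Fin n, d i := by
    rw [Finset.card_eq_sum_card_fiberwise (f := Prod.snd) (t := univ) (fun x _ => mem_univ _)]
    refine Finset.sum_congr rfl (fun i _ => ?_)
    apply Finset.card_bij (fun p _ => p.1)
    · intro p hp
      rw [Finset.mem_filter] at hp
      obtain ⟨hp1, hp2⟩ := hp
      rw [hP, Finset.mem_filter] at hp1
      rw [Finset.mem_filter]
      exact ⟨mem_univ _, hp2 ▸ hp1.2.1, hp2 ▸ hp1.2.2⟩
    · intro p hp q hq h
      rw [Finset.mem_filter] at hp hq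
      exact Prod.ext h (hp.2.trans hq.2.symm)
    · intro j hj
      rw [Finset.mem_filter] at hj
      refine ⟨(j, i), ?_, rfl⟩
      rw [Finset.mem_filter, hP, Finset.mem_filter]
      exact ⟨⟨mem_univ _, hj.2.1, hj.2.2⟩, rfl⟩
  have hsum : ∑ i : Fin n, d i = n - 1 := by rw [← hfib, hPcard, hE]
  intro i0 hi0
  have hn : 0 < n := lt_of_le_of_lt (Nat.zero_le _) i0.2
  have hge : ∀ i : Fin n, 0 < (i : ℕ) → 1 ≤ d i := by
    intro i hi
    obtain ⟨j, hj1, hj2⟩ := h1 i hi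
    rw [hd]
    exact Finset.card_pos.2 ⟨j, Finset.mem_filter.2 ⟨mem_univ _, hj1, hj2⟩⟩
  by_contra hcon
  have hcon' : d i0 ≠ 1 := hcon
  have hdi0 : 2 ≤ d i0 := by have := hge i0 hi0; omega
  set s : Finset (Fin n) := univ.filter (fun i : Fin n => 0 < (i : ℕ)) with hs'
  have hscard : s.card = n - 1 := by
    have : s = univ.erase ⟨0, hn⟩ := by
      ext a; simp [hs', Finset.mem_erase, Fin.ext_iff, Nat.pos_iff_ne_zero]
    rw [this, Finset.card_erase_of_mem (mem_univ _), Finset.card_univ, Fintype.card_fin]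
  have hi0s : i0 ∈ s := Finset.mem_filter.2 ⟨mem_univ _, hi0⟩
  have h2 : ∑ i ∈ s, d i ≤ ∑ i : Fin n, d i :=
    Finset.sum_le_sum_of_subset (Finset.subset_univ s)
  have h3 : d i0 + ∑ i ∈ s.erase i0, d i = ∑ i ∈ s, d i :=
    Finset.add_sum_erase s d hi0s
  have h4 : (s.erase i0).card ≤ ∑ i ∈ s.erase i0, d i := by
    rw [Finset.card_eq_sum_ones]
    apply Finset.sum_le_sum
    intro i hi
    exact hge i (Finset.mem_filter.1 (Finset.mem_of_mem_erase hi)).2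
  have h5 : (s.erase i0).card = n - 2 := by
    rw [Finset.card_erase_of_mem hi0s, hscard]; omega
  have hn2 : 2 ≤ n := by
    have : (i0 : ℕ) < n := i0.2
    omega
  omega

lemma tree_embed_s5 {n N : ℕ} (S : SimpleGraph (Fin n)) (hn : 0 < n)
    (hpar : ∀ i : Fin n, 0 < (i : ℕ) → (univ.filter fun j => j < i ∧ S.Adj j i).card = 1)
    (G : SimpleGraph (Fin N)) (hdeg : ∀ v, n - 1 ≤ (G.neighborSet v).ncard) (hNn : n ≤ N) :
    ∃ f : Fin n → Fin N, Function.Injective f ∧ ∀ ⦃a b : Fin n⦄, S.Adj a b → G.Adj (f a) (f b) := by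
  classical
  have hN : 0 < N := lt_of_lt_of_le hn hNn
  have key : ∀ k, k ≤ n → ∃ f : Fin n → Fin N,
      Set.InjOn f {i : Fin n | (i : ℕ) < k} ∧
      ∀ i j : Fin n, j < i → (i : ℕ) < k → S.Adj j i → G.Adj (f j) (f i) := by
    intro k
    induction k with
    | zero =>
      exact fun _ => ⟨fun _ => ⟨0, hN⟩, by intro a ha; simp at ha,
        fun i j _ h _ => absurd h (Nat.not_lt_zero _)⟩
    | succ k ih =>
      intro hkn
      obtain ⟨f, hf1, hf2⟩ := ih (by omega)
      by_cases hk1 : k = 0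
      · subst hk1
        refine ⟨f, ?_, ?_⟩
        · intro a ha b hb _
          simp only [Set.mem_setOf_eq] at ha hb
          exact Fin.ext (by omega)
        · intro i j hj hik
          omega
      · have hk0 : 0 < k := by omega
        set ik : Fin n := ⟨k, by omega⟩ with hik
        have hcard := hpar ik (by simp [hik]; omega)
        obtain ⟨p, hp⟩ := Finset.card_eq_one.1 hcard
        have hpmem : p ∈ univ.filter fun j => j < ik ∧ S.Adj j ik := by rw [hp]; simp
        rw [Finset.mem_filter] at hpmem
        obtain ⟨-, hpik, hpadj⟩ := hpmem
        set used : Finset (Fin N) := (univ.filter fun i : Fin n => (i : ℕ) < k).image f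
          with huseddef
        have husedcard : used.card ≤ k := by
          calc used.card ≤ (univ.filter fun i : Fin n => (i : ℕ) < k).card :=
                Finset.card_image_le
          _ = k := filter_lt_card (by omega)
        have hfpused : f p ∈ used :=
          Finset.mem_image_of_mem f (Finset.mem_filter.2 ⟨mem_univ _, by
            have : (p : ℕ) < k := hpik
            exact this⟩)
        have hcand : 0 < (G.neighborFinset (f p) \ used.erase (f p)).card := by
          have h1' : (used.erase (f p)).card ≤ k - 1 := by
            rw [Finset.card_erase_of_mem hfpused]; omega
          have h2' : (G.neighborFinset (f p)).card - (used.erase (f p)).card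
              ≤ (G.neighborFinset (f p) \ used.erase (f p)).card :=
            Finset.le_card_sdiff _ _
          have h3' : n - 1 ≤ (G.neighborFinset (f p)).card := by
            have := hdeg (f p)
            rwa [ncard_neighborSet_eq_degree] at this
          omega
        obtain ⟨b, hb⟩ := Finset.card_pos.1 hcand
        rw [Finset.mem_sdiff, mem_neighborFinset] at hb
        obtain ⟨hbadj, hbnot⟩ := hb
        have hbused : b ∉ used := by
          intro hmem
          exact hbnot (Finset.mem_erase.2 ⟨fun h => (G.ne_of_adj hbadj) h.symm, hmem⟩)
        refine ⟨fun i => if (i : ℕ) = k then b else f i, ?_, ?_⟩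
        · intro x hx y hy h
          simp only [Set.mem_setOf_eq] at hx hy
          dsimp only at h
          by_cases hxk : (x : ℕ) = k <;> by_cases hyk : (y : ℕ) = k
          · exact Fin.ext (by omega)
          · rw [if_pos hxk, if_neg hyk] at h
            exfalso; apply hbused
            rw [h]; exact Finset.mem_image_of_mem f (by simp; omega)
          · rw [if_neg hxk, if_pos hyk] at h
            exfalso; apply hbused
            rw [← h]; exact Finset.mem_image_of_mem f (by simp; omega)
          · rw [if_neg hxk, if_neg hyk] at h
            exact hf1 (by simp; omega) (by simp; omega) h
        · intro i j hj hik' hadj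
          dsimp only
          have hjk : (j : ℕ) < k := by
            have : (j : ℕ) < (i : ℕ) := hj
            omega
          have hjne : (j : ℕ) ≠ k := by omega
          by_cases hik'' : (i : ℕ) = k
          · have hieq : i = ik := Fin.ext hik''
            have : j ∈ univ.filter fun j' => j' < ik ∧ S.Adj j' ik := by
              rw [Finset.mem_filter]
              exact ⟨mem_univ _, hieq ▸ hj, hieq ▸ hadj⟩
            rw [hp, Finset.mem_singleton] at this
            subst this
            rw [if_neg hjne, if_pos hik'']
            exact hbadj
          · rw [if_neg hjne, if_neg hik'']
            exact hf2 i j hj (by omega) hadj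
  obtain ⟨f, hf1, hf2⟩ := key n le_rfl
  have hinj : Function.Injective f := fun a b h => hf1 (by simp [a.2]) (by simp [b.2]) h
  refine ⟨f, hinj, ?_⟩
  intro a b hab
  rcases lt_trichotomy a b with h | h | h
  · exact hf2 b a h b.2 hab
  · exact absurd h (by simpa using hab.ne)
  · exact (hf2 a b h a.2 hab.symm).symm


lemma walk_const' {V W : Type*} {G : SimpleGraph V} {F : V → W}
    (h : ∀ a b, G.Adj a b → F a = F b) :
    ∀ {x y : V}, G.Walk x y → F x = F y := by
  intro x y p; induction p with
  | nil => rfl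
  | cons hadj _ ih => rw [h _ _ hadj]; exact ih

lemma slab_card {m k : ℕ} (c : Fin m) :
    (univ.filter fun x : Fin m × Fin k => x.1 = c).card = k := by
  have : (univ.filter fun x : Fin m × Fin k => x.1 = c) = {c} ×ˢ univ := by
    ext ⟨a, b⟩
    simp [Finset.mem_product, eq_comm]
  rw [this, Finset.card_product]
  simp

lemma lower_bound {t n ℓ : ℕ} (hn : 2 ≤ n) (hℓ : ℓ = t * (n - 1) + 1)
    {T : SimpleGraph (Fin n)} (hTc : T.Connected)
    {N : ℕ} (hN : N ≤ (t + 1) * (n - 1)) :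
    ¬ RamseyProp2 N (_root_.starGraph ℓ) T := by
  classical
  intro hR
  set g : Fin N → Fin (t + 1) × Fin (n - 1) :=
    fun x => finProdFinEquiv.symm (Fin.castLE hN x) with hg
  have hginj : Function.Injective g := by
    intro a b h
    have := finProdFinEquiv.symm.injective h
    exact Fin.castLE_injective hN this
  set R : SimpleGraph (Fin N) :=
    SimpleGraph.comap (fun x => (g x).1) (⊤ : SimpleGraph (Fin (t + 1))) with hRdef
  have hRadj : ∀ a b, R.Adj a b ↔ (g a).1 ≠ (g b).1 := by
    intro a b; rw [hRdef]; simp [SimpleGraph.comap]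
  rcases hR R with ⟨f, hfinj, hfadj⟩ | ⟨f, hfinj, hfadj⟩
  · -- red star
    set c := (g (f 0)).1 with hc
    have hmaps : ∀ i : Fin (ℓ + 1), i ≠ 0 → (g (f i)).1 ≠ c := by
      intro i hi
      have hadj : (_root_.starGraph ℓ).Adj i 0 := by
        simp [_root_.starGraph, SimpleGraph.fromRel_adj]
        exact hi
      have := hfadj hadj
      exact (hRadj _ _).1 this
    have hcard : (univ.erase (0 : Fin (ℓ + 1))).card ≤
        (univ.filter fun x : Fin (t + 1) × Fin (n - 1) => x.1 ≠ c).card := by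
      apply Finset.card_le_card_of_injOn (fun i => g (f i))
      · intro i hi
        rw [Finset.mem_coe, Finset.mem_filter]
        exact ⟨mem_univ _, hmaps i (Finset.ne_of_mem_erase hi)⟩
      · intro a _ b _ h
        exact hfinj (hginj h)
    have hcard1 : (univ.erase (0 : Fin (ℓ + 1))).card = ℓ := by
      rw [Finset.card_erase_of_mem (mem_univ _), Finset.card_univ, Fintype.card_fin]; omega
    have hcard2 : (univ.filter fun x : Fin (t + 1) × Fin (n - 1) => x.1 ≠ c).card
        = t * (n - 1) := by
      have hsplit := Finset.card_filter_add_card_filter_not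
        (s := (univ : Finset (Fin (t + 1) × Fin (n - 1))))
        (p := fun x => x.1 = c)
      have huniv : (univ : Finset (Fin (t + 1) × Fin (n - 1))).card = (t + 1) * (n - 1) := by
        rw [Finset.card_univ, Fintype.card_prod, Fintype.card_fin, Fintype.card_fin]
      have hslab := slab_card (k := n - 1) c
      have : (univ.filter fun x : Fin (t + 1) × Fin (n - 1) => ¬ x.1 = c).card
          = (t + 1) * (n - 1) - (n - 1) := by omega
      have heq : (univ.filter fun x : Fin (t + 1) × Fin (n - 1) => x.1 ≠ c)
          = (univ.filter fun x : Fin (t + 1) × Fin (n - 1) => ¬ x.1 = c) := rfl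
      rw [heq, this, Nat.succ_mul, Nat.add_sub_cancel]
    omega
  · -- blue tree
    have hsame : ∀ a b : Fin n, T.Adj a b → (g (f a)).1 = (g (f b)).1 := by
      intro a b hab
      have := hfadj hab
      rw [SimpleGraph.compl_adj] at this
      by_contra hne
      exact this.2 ((hRadj _ _).2 hne)
    have hall : ∀ a b : Fin n, (g (f a)).1 = (g (f b)).1 := by
      intro a b
      obtain ⟨p⟩ := hTc.preconnected a b
      exact walk_const' (F := fun v => (g (f v)).1) hsame p
    set v0 : Fin n := ⟨0, by omega⟩ with hv0
    set c := (g (f v0)).1 with hc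
    have hcard : (univ : Finset (Fin n)).card ≤
        (univ.filter fun x : Fin (t + 1) × Fin (n - 1) => x.1 = c).card := by
      apply Finset.card_le_card_of_injOn (fun i => g (f i))
      · intro i _
        rw [Finset.mem_coe, Finset.mem_filter]
        exact ⟨mem_univ _, hall i v0⟩
      · intro a _ b _ h
        exact hfinj (hginj h)
    rw [slab_card, Finset.card_univ, Fintype.card_fin] at hcard
    omega

lemma upper_bound {t n ℓ : ℕ} (hn : 2 ≤ n) (hℓ : ℓ = t * (n - 1) + 1)
    {T : SimpleGraph (Fin n)} (hT : T.IsTree) :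
    RamseyProp2 (ℓ + n - 1) (_root_.starGraph ℓ) T := by
  classical
  intro R
  by_cases hstar : ∃ v, ℓ ≤ R.degree v
  · left
    obtain ⟨v, hv⟩ := hstar
    obtain ⟨u, husub, hucard⟩ := Finset.exists_subset_card_eq (n := ℓ)
      (s := R.neighborFinset v) hv
    have hcard : Fintype.card {x // x ∈ u} = ℓ := by rw [Fintype.card_coe, hucard]
    set e := Fintype.equivFinOfCardEq hcard with he
    set g : Fin ℓ → Fin (ℓ + n - 1) := fun i => ((e.symm i : {x // x ∈ u}) : Fin (ℓ + n - 1))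
      with hgdef
    have hginj : Function.Injective g :=
      fun a b h => e.symm.injective (Subtype.ext h)
    have hgmem : ∀ i, R.Adj v (g i) := by
      intro i
      have : (g i) ∈ R.neighborFinset v := husub (e.symm i).2
      exact (mem_neighborFinset R v _).1 this
    refine ⟨fun i => if h : i = 0 then v else g (i.pred h), ?_, ?_⟩
    · intro a b h
      dsimp only at h
      by_cases ha : a = 0 <;> by_cases hb : b = 0
      · rw [ha, hb]
      · rw [dif_pos ha, dif_neg hb] at h
        exact absurd h.symm (R.ne_of_adj (hgmem _)).symm
      · rw [dif_neg ha, dif_pos hb] at h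
        exact absurd h (R.ne_of_adj (hgmem _)).symm
      · rw [dif_neg ha, dif_neg hb] at h
        have := hginj h
        have h2 := congrArg Fin.succ this
        rwa [Fin.succ_pred, Fin.succ_pred] at h2
    · intro a b hab
      rw [_root_.starGraph, SimpleGraph.fromRel_adj] at hab
      obtain ⟨hne, hor⟩ := hab
      dsimp only
      rcases hor with h0 | h0
      · have hb0 : ¬ b = 0 := by rw [h0] at hne; exact fun hh => hne hh.symm
        rw [dif_pos h0, dif_neg hb0]
        exact hgmem _
      · have ha0 : ¬ a = 0 := by rw [h0] at hne; exact hne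
        rw [dif_neg ha0, dif_pos h0]
        exact (hgmem _).symm
  · right
    push_neg at hstar
    have hdeg : ∀ v, n - 1 ≤ (Rᶜ.neighborSet v).ncard := by
      intro v
      rw [ncard_neighborSet_eq_degree, SimpleGraph.degree_compl, Fintype.card_fin]
      have := hstar v
      omega
    obtain ⟨w, hwbij, hword⟩ := exists_bfs_order T hT.isConnected (by omega)
    set ew : Fin n ≃ Fin n := Equiv.ofBijective w hwbij with hew
    set S : SimpleGraph (Fin n) := SimpleGraph.comap (⇑ew.toEmbedding) T with hS
    have hSadj : ∀ i j : Fin n, S.Adj i j ↔ T.Adj (w i) (w j) := by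
      intro i j; rw [hS]; rfl
    have hSE : S.edgeFinset.card = n - 1 := by
      have hiso : S ≃g T := SimpleGraph.Iso.comap ew T
      have h1 := hiso.card_edgeFinset_eq
      have h2 := hT.card_edgeFinset
      rw [Fintype.card_fin] at h2
      omega
    have hord : ∀ i : Fin n, 0 < (i : ℕ) → ∃ j, j < i ∧ S.Adj j i := by
      intro i hi
      obtain ⟨j, hj1, hj2⟩ := hword i hi
      exact ⟨j, hj1, (hSadj _ _).2 hj2⟩
    have hpar := parent_unique S hSE hord
    obtain ⟨f, hfinj, hfadj⟩ := tree_embed_s5 S (by omega) hpar Rᶜ hdeg (by omega)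
    refine ⟨f ∘ ew.symm, hfinj.comp ew.symm.injective, ?_⟩
    intro a b hab
    apply hfadj
    rw [hSadj]
    have h1 : w (ew.symm a) = a := ew.apply_symm_apply a
    have h2 : w (ew.symm b) = b := ew.apply_symm_apply b
    rw [h1, h2]
    exact hab

end Aux

theorem stmt5 (t n ℓ : ℕ) (hn : 2 ≤ n) (hℓ : ℓ = t * (n - 1) + 1)
    (T : SimpleGraph (Fin n)) (hT : T.IsTree) :
    ramsey2 (_root_.starGraph ℓ) T = ℓ + n - 1 := by
  have hmul : (t + 1) * (n - 1) = t * (n - 1) + (n - 1) := Nat.succ_mul _ _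
  have hmem : ℓ + n - 1 ∈ {N | RamseyProp2 N (_root_.starGraph ℓ) T} :=
    upper_bound hn hℓ hT
  apply le_antisymm
  · exact Nat.sInf_le hmem
  · apply le_csInf ⟨_, hmem⟩
    intro b hb
    by_contra hlt
    push_neg at hlt
    exact lower_bound hn hℓ hT.isConnected (by omega) hb
end

section
/- If ℓ = t(n−1) + 1 for a non-negative integer t, then for every tree T on n vertices and every m ≥ 2, the 3-color Ramsey number satisfies r(K_{1,ℓ}, T, K_m) = (ℓ + n − 2)(m−1) + 1 = (t+1)(n−1)(m−1) + 1. -/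
open SimpleGraph
open scoped Classical

section Aux

open Finset

variable {V : Type*}

/-- generalized color graph on an arbitrary vertex type -/
def cg (c : V → V → Fin 3) (i : Fin 3) : SimpleGraph V :=
  SimpleGraph.fromRel (fun a b => c a b = i)

lemma cg_adj {c : V → V → Fin 3} (hs : ∀ a b, c a b = c b a) (i : Fin 3) (a b : V) :
    (cg c i).Adj a b ↔ a ≠ b ∧ c a b = i := by
  simp only [cg, SimpleGraph.fromRel_adj, hs a b, or_self]

lemma copies_trans {α β γ : Type*} {H : SimpleGraph α} {G : SimpleGraph β} {G' : SimpleGraph γ}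
    (h : Copies H G) (g : β → γ) (hg : Function.Injective g)
    (hadj : ∀ a b, G.Adj a b → G'.Adj (g a) (g b)) : Copies H G' := by
  obtain ⟨f, hf, hf2⟩ := h
  exact ⟨g ∘ f, hg.comp hf, fun a b hab => hadj _ _ (hf2 hab)⟩

lemma crossing {n : ℕ} {T : SimpleGraph (Fin n)} (S : Finset (Fin n)) :
    ∀ {u w}, T.Walk u w → w ∉ S → u ∈ S → ∃ a ∈ S, ∃ b, b ∉ S ∧ T.Adj a b := by
  intro u w p
  induction p with
  | nil => intro hw hu; exact absurd hu hw
  | @cons u v _ h q ih =>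
    intro hw hu
    by_cases hv : v ∈ S
    · exact ih hw hv
    · exact ⟨u, hu, v, hv, h⟩

lemma ordering {n : ℕ} {T : SimpleGraph (Fin n)} (hc : T.Connected) :
    ∃ σ : Fin n ≃ Fin n, ∀ i : Fin n, 0 < i.val → ∃ j, j < i ∧ T.Adj (σ j) (σ i) := by
  have hn : 0 < n := Fin.pos_iff_nonempty.2 hc.nonempty
  have claim : ∀ k, k ≤ n → ∃ f : Fin k ↪ Fin n,
      ∀ i : Fin k, 0 < i.val → ∃ j, j < i ∧ T.Adj (f j) (f i) := by
    intro k
    induction k with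
    | zero => exact fun _ => ⟨⟨Fin.elim0, fun a => a.elim0⟩, fun i => i.elim0⟩
    | succ k ih =>
      intro hk1
      rcases Nat.eq_zero_or_pos k with hk0 | hkpos
      · subst hk0
        refine ⟨⟨fun _ => ⟨0, hn⟩, fun a b _ => by apply Fin.ext; omega⟩, ?_⟩
        intro i hi
        have : i.val < 1 := i.isLt
        omega
      · obtain ⟨f, hf⟩ := ih (le_of_lt hk1)
        set S : Finset (Fin n) := Finset.univ.map f with hS
        have hcard : S.card = k := by simp [hS]
        have : ∃ w, w ∉ S := by
          by_contra hcon
          push_neg at hcon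
          have : (Finset.univ : Finset (Fin n)).card ≤ S.card :=
            Finset.card_le_card (fun x _ => hcon x)
          simp [hcard] at this
          omega
        obtain ⟨w, hw⟩ := this
        have hu : f ⟨0, hkpos⟩ ∈ S := by simp [hS]
        obtain ⟨a, ha, b, hb, hab⟩ :=
          crossing S ((hc.preconnected _ w).some) hw hu
        obtain ⟨j₀, hj₀⟩ : ∃ j₀ : Fin k, f j₀ = a := by
          obtain ⟨j₀, _, h⟩ := Finset.mem_map.1 ha
          exact ⟨j₀, h⟩
        have hbS : ∀ j : Fin k, b ≠ f j := by
          intro j hbj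
          exact hb (hbj ▸ Finset.mem_map.2 ⟨j, Finset.mem_univ _, rfl⟩)
        refine ⟨⟨fun i => if h : i.val < k then f ⟨i.val, h⟩ else b, ?_⟩, ?_⟩
        · intro x y hxy
          dsimp only at hxy
          by_cases hx : x.val < k <;> by_cases hy : y.val < k
          · rw [dif_pos hx, dif_pos hy] at hxy
            have := congrArg Fin.val (f.injective hxy)
            simp only at this
            apply Fin.ext; exact this
          · rw [dif_pos hx, dif_neg hy] at hxy
            exact absurd hxy.symm (hbS _)
          · rw [dif_neg hx, dif_pos hy] at hxy
            exact absurd hxy (hbS _)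
          · apply Fin.ext
            have := x.isLt; have := y.isLt; omega
        · intro i hi
          show ∃ j, j < i ∧ T.Adj (if h : j.val < k then f ⟨j.val, h⟩ else b)
            (if h : i.val < k then f ⟨i.val, h⟩ else b)
          by_cases hik : i.val < k
          · obtain ⟨j, hj, hadj⟩ := hf ⟨i.val, hik⟩ hi
            have hjk : j.val < k := j.isLt
            have hji : j.val < i.val := hj
            refine ⟨⟨j.val, by omega⟩, by simpa [Fin.lt_def] using hji, ?_⟩
            rw [dif_pos hik]
            have : (if h : (⟨j.val, by omega⟩ : Fin (k+1)).val < k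
                then f ⟨(⟨j.val, by omega⟩ : Fin (k+1)).val, h⟩ else b) = f j := by
              rw [dif_pos hjk]
            rw [this]
            exact hadj
          · have hik' : i.val = k := by omega
            have hjk : j₀.val < k := j₀.isLt
            refine ⟨⟨j₀.val, by omega⟩, by simp [Fin.lt_def]; omega, ?_⟩
            rw [dif_neg hik]
            have : (if h : (⟨j₀.val, by omega⟩ : Fin (k+1)).val < k
                then f ⟨(⟨j₀.val, by omega⟩ : Fin (k+1)).val, h⟩ else b) = f j₀ := by
              rw [dif_pos hjk]
            rw [this, hj₀]
            exact hab
  obtain ⟨f, hf⟩ := claim n le_rfl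
  have hbij : Function.Bijective f := (Finite.injective_iff_bijective).1 f.injective
  refine ⟨Equiv.ofBijective f hbij, ?_⟩
  intro i hi
  obtain ⟨j, hj, hadj⟩ := hf i hi
  exact ⟨j, hj, hadj⟩

end Aux
section Aux2

open Finset

lemma tree_order {n : ℕ} {T : SimpleGraph (Fin n)} (hT : T.IsTree) :
    ∃ (σ : Fin n ≃ Fin n) (P : Fin n → Fin n),
      (∀ i : Fin n, 0 < i.val → P i < i ∧ T.Adj (σ (P i)) (σ i)) ∧
      (∀ i j : Fin n, j < i → T.Adj (σ j) (σ i) → j = P i) := by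
  obtain ⟨σ, hσ⟩ := ordering hT.isConnected
  have hn : 0 < n := Fin.pos_iff_nonempty.2 hT.isConnected.nonempty
  have hσ' : ∀ i : Fin n, 0 < i.val → ∃ j, j < i ∧ T.Adj (σ j) (σ i) := hσ
  classical
  set P : Fin n → Fin n := fun i =>
    if h : 0 < i.val then (hσ' i h).choose else i with hP
  have hP1 : ∀ i : Fin n, 0 < i.val → P i < i ∧ T.Adj (σ (P i)) (σ i) := by
    intro i hi
    simp only [hP, dif_pos hi]
    exact (hσ' i hi).choose_spec
  refine ⟨σ, P, hP1, ?_⟩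
  -- uniqueness via counting
  set D : Finset (Fin n) := Finset.univ.filter (fun i : Fin n => 0 < i.val) with hD
  have hDcard : D.card = n - 1 := by
    have : D = Finset.univ.erase ⟨0, hn⟩ := by
      ext x
      simp [hD, Finset.mem_erase, Fin.ext_iff, Nat.pos_iff_ne_zero]
    rw [this, Finset.card_erase_of_mem (Finset.mem_univ _)]
    simp
  set E : Fin n → Sym2 (Fin n) := fun i => s(σ (P i), σ i) with hE
  have hmaps : ∀ i ∈ D, E i ∈ T.edgeFinset := by
    intro i hi
    rw [SimpleGraph.mem_edgeFinset]
    exact (hP1 i (by simpa [hD] using hi)).2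
  have hinj : Set.InjOn E D := by
    intro i₁ h₁ i₂ h₂ heq
    have h₁' : 0 < i₁.val := by simpa [hD] using h₁
    have h₂' : 0 < i₂.val := by simpa [hD] using h₂
    rcases Sym2.eq_iff.1 heq with ⟨ha, hb⟩ | ⟨ha, hb⟩
    · exact σ.injective hb
    · have e1 : P i₁ = i₂ := σ.injective ha
      have e2 : i₁ = P i₂ := σ.injective hb
      have l1 : P i₁ < i₁ := (hP1 i₁ h₁').1
      have l2 : P i₂ < i₂ := (hP1 i₂ h₂').1
      rw [e1] at l1
      rw [← e2] at l2
      exact absurd l1 (not_lt_of_gt l2)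
  have hEcard : (D.image E).card = n - 1 := by
    rw [Finset.card_image_of_injOn hinj, hDcard]
  have hTcard : T.edgeFinset.card = n - 1 := by
    have := hT.card_edgeFinset
    simp only [Fintype.card_fin] at this
    omega
  have himg : D.image E = T.edgeFinset := by
    apply Finset.eq_of_subset_of_card_le
    · intro e he
      obtain ⟨i, hi, rfl⟩ := Finset.mem_image.1 he
      exact hmaps i hi
    · rw [hEcard, hTcard]
  intro i j hji hadj
  have hi : 0 < i.val := by
    have : j.val < i.val := hji
    omega
  have hmem : s(σ j, σ i) ∈ D.image E := by
    rw [himg, SimpleGraph.mem_edgeFinset]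
    exact hadj
  obtain ⟨i', hi', heq⟩ := Finset.mem_image.1 hmem
  have hi'' : 0 < i'.val := by simpa [hD] using hi'
  rcases Sym2.eq_iff.1 heq with ⟨ha, hb⟩ | ⟨ha, hb⟩
  · -- σ (P i') = σ j, σ i' = σ i
    have e2 : i' = i := σ.injective hb
    have e1 : P i' = j := σ.injective ha
    rw [← e2]; exact e1.symm
  · -- σ (P i') = σ i, σ i' = σ j
    have e2 : i' = j := σ.injective hb
    have e1 : P i' = i := σ.injective ha
    have l1 : P i' < i' := (hP1 i' hi'').1
    rw [e1, e2] at l1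
    exact absurd hji (not_lt_of_gt l1)

lemma tree_embed_s8 {n : ℕ} {T : SimpleGraph (Fin n)} (hT : T.IsTree)
    {V : Type*} [Fintype V] (G : SimpleGraph V) [DecidableRel G.Adj]
    (hdeg : ∀ v : V, n - 1 ≤ G.degree v) (hV : Nonempty V) :
    Copies T G := by
  classical
  obtain ⟨σ, P, hP1, hP2⟩ := tree_order hT
  have hn : 0 < n := Fin.pos_iff_nonempty.2 hT.isConnected.nonempty
  have claim : ∀ k, k ≤ n → ∃ g : Fin n → V,
      Set.InjOn g {i : Fin n | i.val < k} ∧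
      ∀ i : Fin n, i.val < k → 0 < i.val → G.Adj (g (P i)) (g i) := by
    intro k
    induction k with
    | zero =>
      exact fun _ => ⟨fun _ => hV.some, by intro a ha; simp at ha, fun i hi => by omega⟩
    | succ k ih =>
      intro hk1
      obtain ⟨g, hinj, hadj⟩ := ih (le_of_lt hk1)
      rcases Nat.eq_zero_or_pos k with hk0 | hkpos
      · subst hk0
        refine ⟨g, ?_, ?_⟩
        · intro a ha b hb _
          simp only [Set.mem_setOf_eq] at ha hb
          apply Fin.ext; omega
        · intro i hi1 hi0; omega
      · set i₀ : Fin n := ⟨k, by omega⟩ with hi₀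
        have hq := hP1 i₀ (by simpa [hi₀] using hkpos)
        set q : Fin n := P i₀ with hqdef
        have hqk : q.val < k := hq.1
        set used : Finset V := (Finset.univ.filter (fun j : Fin n => j.val < k)).image g
          with husr
        set nb : Finset V := G.neighborFinset (g q) with hnb
        have hgq_used : g q ∈ used := by
          apply Finset.mem_image.2
          exact ⟨q, Finset.mem_filter.2 ⟨Finset.mem_univ _, hqk⟩, rfl⟩
        have husedcard : used.card ≤ k := by
          apply le_trans Finset.card_image_le
          have : ((Finset.univ.filter (fun j : Fin n => j.val < k))).card ≤
              (Finset.range k).card := by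
            apply Finset.card_le_card_of_injOn (fun j => j.val)
            · intro a ha
              exact Finset.mem_range.2 (Finset.mem_filter.1 ha).2
            · intro a _ b _ h
              exact Fin.ext h
          simpa using this
        have key : nb \ used = nb \ used.erase (g q) := by
          ext x
          simp only [Finset.mem_sdiff, Finset.mem_erase]
          constructor
          · rintro ⟨h1, h2⟩
            exact ⟨h1, fun hcon => h2 hcon.2⟩
          · rintro ⟨h1, h2⟩
            refine ⟨h1, fun hcon => ?_⟩
            have hxne : x ≠ g q := by
              intro hcon2
              rw [hnb] at h1
              have := SimpleGraph.mem_neighborFinset G (g q) x |>.1 h1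
              exact this.ne' hcon2
            exact h2 ⟨hxne, hcon⟩
        have hcard : 1 ≤ (nb \ used).card := by
          rw [key]
          have h1 : (used.erase (g q)).card ≤ k - 1 := by
            rw [Finset.card_erase_of_mem hgq_used]
            omega
          have h2 : n - 1 ≤ nb.card := by
            rw [hnb]
            exact hdeg (g q)
          have := Finset.le_card_sdiff (used.erase (g q)) nb
          omega
        have hpos : 0 < (nb \ used).card := by omega
        obtain ⟨x, hx⟩ := Finset.card_pos.1 hpos
        obtain ⟨hxnb, hxused⟩ := Finset.mem_sdiff.1 hx
        refine ⟨Function.update g i₀ x, ?_, ?_⟩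
        · intro a ha b hb heq
          simp only [Set.mem_setOf_eq] at ha hb
          by_cases hak : a.val < k <;> by_cases hbk : b.val < k
          · have h1 : a ≠ i₀ := by intro h; rw [h] at hak; simp [hi₀] at hak
            have h2 : b ≠ i₀ := by intro h; rw [h] at hbk; simp [hi₀] at hbk
            rw [Function.update_of_ne h1, Function.update_of_ne h2] at heq
            exact hinj hak hbk heq
          · have hbk' : b.val = k := by omega
            have h1 : a ≠ i₀ := by intro h; rw [h] at hak; simp [hi₀] at hak
            have h2 : b = i₀ := Fin.ext hbk'
            rw [Function.update_of_ne h1, h2, Function.update_self] at heq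
            exfalso
            apply hxused
            rw [← heq]
            exact Finset.mem_image.2 ⟨a, Finset.mem_filter.2 ⟨Finset.mem_univ _, hak⟩, rfl⟩
          · have hak' : a.val = k := by omega
            have h1 : b ≠ i₀ := by intro h; rw [h] at hbk; simp [hi₀] at hbk
            have h2 : a = i₀ := Fin.ext hak'
            rw [Function.update_of_ne h1, h2, Function.update_self] at heq
            exfalso
            apply hxused
            rw [heq]
            exact Finset.mem_image.2 ⟨b, Finset.mem_filter.2 ⟨Finset.mem_univ _, hbk⟩, rfl⟩
          · apply Fin.ext; omega
        · intro i hi1 hi0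
          by_cases hik : i.val < k
          · have h1 : i ≠ i₀ := by intro h; rw [h] at hik; simp [hi₀] at hik
            have hPi : P i < i := (hP1 i hi0).1
            have h2 : P i ≠ i₀ := by
              intro h
              have : (P i).val < i.val := hPi
              rw [h] at this
              simp [hi₀] at this
              omega
            rw [Function.update_of_ne h1, Function.update_of_ne h2]
            exact hadj i hik hi0
          · have hik' : i.val = k := by omega
            have h2 : i = i₀ := Fin.ext hik'
            have h2v : (i₀ : Fin n).val = k := rfl
            have hq_ne : q ≠ i₀ := by
              intro h
              have := hqk
              rw [h, h2v] at this
              omega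
            rw [h2]
            have e1 : Function.update g i₀ x i₀ = x := Function.update_self _ _ _
            have e2 : Function.update g i₀ x (P i₀) = g q := by
              rw [← hqdef, Function.update_of_ne hq_ne]
            rw [e1, e2]
            exact (SimpleGraph.mem_neighborFinset G (g q) x).1 hxnb
  obtain ⟨g, hinj, hadj⟩ := claim n le_rfl
  have hginj : Function.Injective g := by
    intro a b h
    exact hinj (by simp [a.isLt]) (by simp [b.isLt]) h
  refine ⟨g ∘ σ.symm, hginj.comp σ.symm.injective, ?_⟩
  intro a b hab
  set i : Fin n := σ.symm a with hi
  set j : Fin n := σ.symm b with hj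
  have hadj' : T.Adj (σ i) (σ j) := by
    rw [hi, hj, σ.apply_symm_apply, σ.apply_symm_apply]
    exact hab
  rcases lt_trichotomy i j with h | h | h
  · have heq : i = P j := hP2 j i h hadj'
    have hji : 0 < j.val := by
      have : i.val < j.val := h
      omega
    have hG := hadj j j.isLt hji
    rw [← heq] at hG
    exact hG
  · exact absurd (h ▸ hadj') (T.loopless.irrefl _)
  · have heq : j = P i := hP2 i j h hadj'.symm
    have hii : 0 < i.val := by
      have : j.val < i.val := h
      omega
    have hG := hadj i i.isLt hii
    rw [← heq] at hG
    exact hG.symm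

end Aux2
section Aux3

open Finset

variable {V : Type*}

lemma star_adj (ℓ : ℕ) (a b : Fin (ℓ + 1)) :
    (_root_.starGraph ℓ).Adj a b ↔ a ≠ b ∧ (a = 0 ∨ b = 0) := by
  simp only [_root_.starGraph, SimpleGraph.fromRel_adj]

lemma star_copies {ℓ : ℕ} [Fintype V] {G : SimpleGraph V} [DecidableRel G.Adj] {v : V}
    (h : ℓ ≤ G.degree v) : Copies (_root_.starGraph ℓ) G := by
  classical
  have hcard : Fintype.card (Fin ℓ) ≤ Fintype.card (G.neighborFinset v) := by
    rw [Fintype.card_coe, Fintype.card_fin]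
    exact h
  obtain ⟨e⟩ := Function.Embedding.nonempty_of_card_le hcard
  refine ⟨fun i => if h : i = 0 then v else (e (i.pred h) : V), ?_, ?_⟩
  · intro a b hab
    dsimp only at hab
    by_cases ha : a = 0 <;> by_cases hb : b = 0
    · rw [ha, hb]
    · rw [dif_pos ha, dif_neg hb] at hab
      exfalso
      have := (e (b.pred hb)).2
      rw [SimpleGraph.mem_neighborFinset] at this
      exact this.ne' hab.symm
    · rw [dif_neg ha, dif_pos hb] at hab
      exfalso
      have := (e (a.pred ha)).2
      rw [SimpleGraph.mem_neighborFinset] at this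
      exact this.ne' hab
    · rw [dif_neg ha, dif_neg hb] at hab
      have : a.pred ha = b.pred hb := e.injective (Subtype.ext hab)
      have := congrArg Fin.succ this
      rwa [Fin.succ_pred, Fin.succ_pred] at this
  · intro a b hab
    dsimp only
    rw [star_adj] at hab
    obtain ⟨hne, hor⟩ := hab
    rcases hor with h0 | h0
    · have hb : b ≠ 0 := by rw [h0] at hne; exact hne.symm
      rw [h0, dif_pos rfl, dif_neg hb]
      have := (e (b.pred hb)).2
      rwa [SimpleGraph.mem_neighborFinset] at this
    · have ha : a ≠ 0 := by rw [h0] at hne; exact hne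
      rw [h0, dif_pos rfl, dif_neg ha]
      have := (e (a.pred ha)).2
      rw [SimpleGraph.mem_neighborFinset] at this
      exact this.symm

lemma blue_deg [Fintype V] [DecidableEq V] {c : V → V → Fin 3} (hs : ∀ a b, c a b = c b a)
    [DecidableRel (cg c 0).Adj] [DecidableRel (cg c 1).Adj] [DecidableRel (cg c 2).Adj]
    (v : V) :
    Fintype.card V - 1 - (cg c 0).degree v - (cg c 2).degree v ≤ (cg c 1).degree v := by
  classical
  have hsub : (Finset.univ.erase v) \
      ((cg c 0).neighborFinset v ∪ (cg c 2).neighborFinset v) ⊆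
      (cg c 1).neighborFinset v := by
    intro x hx
    obtain ⟨hx1, hx2⟩ := Finset.mem_sdiff.1 hx
    obtain ⟨hxv, _⟩ := Finset.mem_erase.1 hx1
    rw [Finset.mem_union] at hx2
    push_neg at hx2
    obtain ⟨h0, h2⟩ := hx2
    rw [SimpleGraph.mem_neighborFinset, cg_adj hs] at h0 h2
    rw [SimpleGraph.mem_neighborFinset, cg_adj hs]
    refine ⟨hxv.symm, ?_⟩
    have hvx : v ≠ x := hxv.symm
    have h0' : c v x ≠ 0 := fun hcon => h0 ⟨hvx, hcon⟩
    have h2' : c v x ≠ 2 := fun hcon => h2 ⟨hvx, hcon⟩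
    have := (c v x).isLt
    apply Fin.ext
    have e0 := Fin.val_eq_val (c v x) 0
    have e2 := Fin.val_eq_val (c v x) 2
    simp only [Fin.val_zero] at e0
    have v0 : (c v x).val ≠ 0 := fun hcon => h0' (Fin.ext hcon)
    have v2 : (c v x).val ≠ 2 := fun hcon => h2' (by apply Fin.ext; simpa using hcon)
    simp only [Fin.val_one]
    omega
  have h1 := Finset.card_le_card hsub
  have h2 := Finset.le_card_sdiff
    ((cg c 0).neighborFinset v ∪ (cg c 2).neighborFinset v) (Finset.univ.erase v)
  have h3 := Finset.card_union_le ((cg c 0).neighborFinset v) ((cg c 2).neighborFinset v)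
  have h4 : (Finset.univ.erase v).card = Fintype.card V - 1 := by
    rw [Finset.card_erase_of_mem (Finset.mem_univ _), Finset.card_univ]
  have e0 : ((cg c 0).neighborFinset v).card = (cg c 0).degree v := rfl
  have e1 : ((cg c 1).neighborFinset v).card = (cg c 1).degree v := rfl
  have e2 : ((cg c 2).neighborFinset v).card = (cg c 2).degree v := rfl
  omega

lemma rp3_mono {α β γ : Type*} {G₁ : SimpleGraph α} {G₂ : SimpleGraph β} {G₃ : SimpleGraph γ}
    {k M : ℕ} (hkM : k ≤ M) (h : RamseyProp3 k G₁ G₂ G₃) : RamseyProp3 M G₁ G₂ G₃ := by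
  intro c hs
  set c' : Fin k → Fin k → Fin 3 := fun a b => c (Fin.castLE hkM a) (Fin.castLE hkM b) with hc'
  have hs' : ∀ a b, c' a b = c' b a := fun a b => hs _ _
  have hlift : ∀ i : Fin 3, ∀ a b : Fin k, (colorGraph c' i).Adj a b →
      (colorGraph c i).Adj (Fin.castLE hkM a) (Fin.castLE hkM b) := by
    intro i a b hab
    simp only [colorGraph, SimpleGraph.fromRel_adj] at hab ⊢
    obtain ⟨hne, hor⟩ := hab
    exact ⟨fun hcon => hne (Fin.castLE_injective hkM hcon), hor⟩
  rcases h c' hs' with h1 | h1 | h1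
  · exact Or.inl (copies_trans h1 _ (Fin.castLE_injective hkM) (hlift 0))
  · exact Or.inr (Or.inl (copies_trans h1 _ (Fin.castLE_injective hkM) (hlift 1)))
  · exact Or.inr (Or.inr (copies_trans h1 _ (Fin.castLE_injective hkM) (hlift 2)))

end Aux3
section Aux4

open Finset

lemma upper {t n ℓ : ℕ} (hℓ : ℓ = t * (n - 1) + 1) {T : SimpleGraph (Fin n)} (hT : T.IsTree) :
    ∀ m : ℕ, ∀ (V : Type) [instV : Fintype V], ∀ c : V → V → Fin 3,
      (∀ a b, c a b = c b a) → (t + 1) * (n - 1) * (m - 1) + 1 ≤ Fintype.card V →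
      Copies (_root_.starGraph ℓ) (cg c 0) ∨ Copies T (cg c 1) ∨
        Copies (⊤ : SimpleGraph (Fin m)) (cg c 2) := by
  intro m
  induction m with
  | zero =>
    intro V _ c hs hcard
    right; right
    exact ⟨Fin.elim0, fun a => a.elim0, fun a => a.elim0⟩
  | succ m IH =>
    intro V instV c hs hcard
    rcases Nat.eq_zero_or_pos m with hm0 | hmpos
    · subst hm0
      right; right
      have h1 : 1 ≤ Fintype.card V := by simpa using hcard
      obtain ⟨v⟩ := Fintype.card_pos_iff.1 h1
      refine ⟨fun _ => v, fun a b _ => by apply Fin.ext; omega, ?_⟩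
      intro a b hab
      exact absurd (show a = b by apply Fin.ext; omega) hab.ne
    · obtain ⟨m', rfl⟩ : ∃ m', m = m' + 1 := ⟨m - 1, by omega⟩
      classical
      by_cases hbig : ∃ v : V, (t + 1) * (n - 1) * m' + 1 ≤ (cg c 2).degree v
      · obtain ⟨v, hv⟩ := hbig
        set W := ((cg c 2).neighborFinset v) with hW
        set c' : W → W → Fin 3 := fun a b => c a b with hc'
        have hs' : ∀ a b : W, c' a b = c' b a := fun a b => hs _ _
        have hWcard : (t + 1) * (n - 1) * ((m' + 1) - 1) + 1 ≤ Fintype.card W := by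
          rw [Fintype.card_coe]
          simpa [hW] using hv
        have hlift : ∀ i : Fin 3, ∀ a b : W, (cg c' i).Adj a b →
            (cg c i).Adj (a : V) (b : V) := by
          intro i a b hab
          rw [cg_adj hs'] at hab
          rw [cg_adj hs]
          exact ⟨fun hcon => hab.1 (Subtype.ext hcon), hab.2⟩
        rcases IH W c' hs' hWcard with h1 | h1 | h1
        · exact Or.inl (copies_trans h1 Subtype.val Subtype.val_injective (hlift 0))
        · exact Or.inr (Or.inl (copies_trans h1 Subtype.val Subtype.val_injective (hlift 1)))
        · right; right
          obtain ⟨f, hfinj, hfadj⟩ := h1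
          have hmemW : ∀ j : W, (cg c 2).Adj v (j : V) := by
            intro j
            exact (SimpleGraph.mem_neighborFinset _ _ _).1 j.2
          refine ⟨fun i => if h : i.val < m' + 1 then (f ⟨i.val, h⟩ : V) else v, ?_, ?_⟩
          · intro a b hab
            dsimp only at hab
            by_cases ha : a.val < m' + 1 <;> by_cases hb : b.val < m' + 1
            · rw [dif_pos ha, dif_pos hb] at hab
              have h2 := hfinj (Subtype.ext hab)
              apply Fin.ext
              have := congrArg Fin.val h2
              simpa using this
            · rw [dif_pos ha, dif_neg hb] at hab
              exact absurd hab ((hmemW _).ne')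
            · rw [dif_neg ha, dif_pos hb] at hab
              exact absurd hab.symm ((hmemW _).ne')
            · apply Fin.ext
              have := a.isLt; have := b.isLt
              omega
          · intro a b hab
            have hne : a ≠ b := hab.ne
            dsimp only
            by_cases ha : a.val < m' + 1 <;> by_cases hb : b.val < m' + 1
            · rw [dif_pos ha, dif_pos hb]
              have htop : (⊤ : SimpleGraph (Fin (m' + 1))).Adj ⟨a.val, ha⟩ ⟨b.val, hb⟩ := by
                rw [SimpleGraph.top_adj]
                intro hcon
                apply hne
                apply Fin.ext
                simpa using congrArg Fin.val hcon
              exact hlift 2 _ _ (hfadj htop)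
            · rw [dif_pos ha, dif_neg hb]
              exact (hmemW _).symm
            · rw [dif_neg ha, dif_pos hb]
              exact hmemW _
            · exfalso
              apply hne
              apply Fin.ext
              have := a.isLt; have := b.isLt
              omega
      · push_neg at hbig
        by_cases hstar : ∃ v : V, ℓ ≤ (cg c 0).degree v
        · obtain ⟨v, hv⟩ := hstar
          exact Or.inl (star_copies hv)
        · push_neg at hstar
          right; left
          have hkey : (t+1)*(n-1)*(m'+1) = (t+1)*(n-1)*m' + (t*(n-1)) + (n-1) := by ring
          have hcard' : (t+1)*(n-1)*(m'+1) + 1 ≤ Fintype.card V := by simpa using hcard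
          have hdeg : ∀ v : V, n - 1 ≤ (cg c 1).degree v := by
            intro v
            have h0 : (cg c 0).degree v + 1 ≤ ℓ := hstar v
            have h2 : (cg c 2).degree v ≤ (t+1)*(n-1)*m' := by
              have := hbig v
              omega
            have hb := blue_deg hs v
            have hb' : Fintype.card V ≤
                (cg c 1).degree v + (cg c 0).degree v + (cg c 2).degree v + 1 := by
              omega
            rw [hℓ] at h0
            generalize hgen1 : (t+1)*(n-1)*m' = Pb at h2 hkey
            generalize hgen2 : (t+1)*(n-1)*(m'+1) = Qb at hcard' hkey
            generalize hgen3 : t*(n-1) = Rb at h0 hkey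
            omega
          have hne : Nonempty V :=
            Fintype.card_pos_iff.1 (Nat.lt_of_lt_of_le (Nat.succ_pos _) hcard')
          exact tree_embed_s8 hT (cg c 1) hdeg hne

end Aux4
section Aux5

lemma lower0 {ℓ n m : ℕ} (hn : 1 ≤ n) (hm : 1 ≤ m) {T : SimpleGraph (Fin n)} :
    ¬ RamseyProp3 0 (_root_.starGraph ℓ) T (⊤ : SimpleGraph (Fin m)) := by
  intro h
  rcases h (fun _ _ => 0) (fun _ _ => rfl) with ⟨f, _, _⟩ | ⟨f, _, _⟩ | ⟨f, _, _⟩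
  · exact (f 0).elim0
  · exact (f ⟨0, hn⟩).elim0
  · exact (f ⟨0, hm⟩).elim0

lemma lower {t n m ℓ : ℕ} (hn : 2 ≤ n) (hm : 2 ≤ m) (hℓ : ℓ = t * (n - 1) + 1)
    {T : SimpleGraph (Fin n)} (hT : T.IsTree) :
    ¬ RamseyProp3 ((t + 1) * (n - 1) * (m - 1)) (_root_.starGraph ℓ) T (⊤ : SimpleGraph (Fin m)) := by
  classical
  intro hR
  have ecard : Fintype.card (Fin (m - 1) × Fin (t + 1) × Fin (n - 1)) =
      (t + 1) * (n - 1) * (m - 1) := by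
    simp [Fintype.card_prod]
    ring
  obtain e := Fintype.equivFinOfCardEq ecard
  set d : (Fin (m - 1) × Fin (t + 1) × Fin (n - 1)) →
      (Fin (m - 1) × Fin (t + 1) × Fin (n - 1)) → Fin 3 := fun x y =>
    if x.1 = y.1 then (if x.2.1 = y.2.1 then (1 : Fin 3) else 0) else 2 with hd
  have hd2 : ∀ x y, d x y = 2 ↔ x.1 ≠ y.1 := by
    intro x y
    by_cases h1 : x.1 = y.1 <;> by_cases h2 : x.2.1 = y.2.1 <;>
      simp [hd, h1, h2] <;> decide
  have hd0 : ∀ x y, d x y = 0 ↔ x.1 = y.1 ∧ x.2.1 ≠ y.2.1 := by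
    intro x y
    by_cases h1 : x.1 = y.1 <;> by_cases h2 : x.2.1 = y.2.1 <;>
      simp [hd, h1, h2] <;> decide
  have hd1 : ∀ x y, d x y = 1 ↔ x.1 = y.1 ∧ x.2.1 = y.2.1 := by
    intro x y
    by_cases h1 : x.1 = y.1 <;> by_cases h2 : x.2.1 = y.2.1 <;>
      simp [hd, h1, h2] <;> decide
  set c : Fin ((t + 1) * (n - 1) * (m - 1)) → Fin ((t + 1) * (n - 1) * (m - 1)) → Fin 3 :=
    fun x y => d (e.symm x) (e.symm y) with hc
  have hsymm : ∀ a b, c a b = c b a := by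
    intro a b
    show d (e.symm a) (e.symm b) = d (e.symm b) (e.symm a)
    simp only [hd]
    by_cases h1 : (e.symm a).1 = (e.symm b).1
    · by_cases h2 : (e.symm a).2.1 = (e.symm b).2.1
      · rw [if_pos h1, if_pos h2, if_pos h1.symm, if_pos h2.symm]
      · rw [if_pos h1, if_neg h2, if_pos h1.symm, if_neg (fun h => h2 (Eq.symm h))]
    · rw [if_neg h1, if_neg (fun h => h1 (Eq.symm h))]
  have hcg : ∀ i : Fin 3, colorGraph c i = cg c i := fun _ => rfl
  rcases hR c hsymm with ⟨f, hfinj, hfadj⟩ | ⟨f, hfinj, hfadj⟩ | ⟨f, hfinj, hfadj⟩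
  · -- red star: impossible
    set w : Fin (ℓ + 1) → (Fin (m - 1) × Fin (t + 1) × Fin (n - 1)) :=
      fun i => e.symm (f i) with hw
    have hadj0 : ∀ i : Fin (ℓ + 1), i ≠ 0 →
        (w 0).1 = (w i).1 ∧ (w 0).2.1 ≠ (w i).2.1 := by
      intro i hi
      have hstar : (_root_.starGraph ℓ).Adj 0 i := (star_adj ℓ 0 i).2 ⟨Ne.symm hi, Or.inl rfl⟩
      have h := hfadj hstar
      rw [hcg 0, cg_adj hsymm] at h
      exact (hd0 _ _).1 h.2
    set φ : Fin ℓ → ({b : Fin (t + 1) // b ≠ (w 0).2.1} × Fin (n - 1)) := fun i =>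
      ⟨⟨(w i.succ).2.1, Ne.symm (hadj0 i.succ (Fin.succ_ne_zero i)).2⟩, (w i.succ).2.2⟩ with hφ
    have hφinj : Function.Injective φ := by
      intro i j hij
      have h21 : (w i.succ).2.1 = (w j.succ).2.1 := by
        have := congrArg (fun z => (z.1 : Fin (t + 1))) hij
        simpa [hφ] using this
      have h22 : (w i.succ).2.2 = (w j.succ).2.2 := by
        have := congrArg (fun z => z.2) hij
        simpa [hφ] using this
      have h1 : (w i.succ).1 = (w j.succ).1 := by
        rw [← (hadj0 i.succ (Fin.succ_ne_zero i)).1, (hadj0 j.succ (Fin.succ_ne_zero j)).1]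
      have hweq : w i.succ = w j.succ := by
        apply Prod.ext h1
        apply Prod.ext h21 h22
      have hfeq : f i.succ = f j.succ := by
        have := congrArg e hweq
        simpa [hw] using this
      have := hfinj hfeq
      exact Fin.succ_injective _ this
    have hcard := Fintype.card_le_of_injective φ hφinj
    have hsub : Fintype.card {b : Fin (t + 1) // b ≠ (w 0).2.1} = t := by
      simp [Fintype.card_subtype_compl]
    rw [Fintype.card_fin, Fintype.card_prod, hsub, Fintype.card_fin] at hcard
    omega
  · -- blue tree: impossible
    set w : Fin n → (Fin (m - 1) × Fin (t + 1) × Fin (n - 1)) := fun i => e.symm (f i) with hw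
    have hedge : ∀ {a b : Fin n}, T.Adj a b →
        (w a).1 = (w b).1 ∧ (w a).2.1 = (w b).2.1 := by
      intro a b hab
      have h := hfadj hab
      rw [hcg 1, cg_adj hsymm] at h
      exact (hd1 _ _).1 h.2
    have hwalk : ∀ {a b : Fin n}, T.Walk a b →
        (w a).1 = (w b).1 ∧ (w a).2.1 = (w b).2.1 := by
      intro a b p
      induction p with
      | nil => exact ⟨rfl, rfl⟩
      | cons h q ih =>
        obtain ⟨e1, e2⟩ := hedge h
        exact ⟨e1.trans ih.1, e2.trans ih.2⟩
    have hψinj : Function.Injective (fun i : Fin n => (w i).2.2) := by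
      intro a b hab
      obtain ⟨e1, e2⟩ := hwalk (hT.isConnected.preconnected a b).some
      have hweq : w a = w b := by
        apply Prod.ext e1
        apply Prod.ext e2 hab
      have : f a = f b := by
        have := congrArg e hweq
        simpa [hw] using this
      exact hfinj this
    have hcard := Fintype.card_le_of_injective _ hψinj
    rw [Fintype.card_fin, Fintype.card_fin] at hcard
    omega
  · -- green K_m: impossible
    have hφinj : Function.Injective (fun i : Fin m => (e.symm (f i)).1) := by
      intro i j hij
      by_contra hne
      have htop : (⊤ : SimpleGraph (Fin m)).Adj i j := by rwa [SimpleGraph.top_adj]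
      have h := hfadj htop
      rw [hcg 2, cg_adj hsymm] at h
      exact (hd2 _ _).1 h.2 hij
    have hcard := Fintype.card_le_of_injective _ hφinj
    rw [Fintype.card_fin, Fintype.card_fin] at hcard
    omega

end Aux5
theorem stmt8 (t n ℓ m : ℕ) (hℓ : ℓ = t * (n - 1) + 1) (hm : 2 ≤ m)
    (T : SimpleGraph (Fin n)) (hT : T.IsTree) :
    ramsey3 (_root_.starGraph ℓ) T (⊤ : SimpleGraph (Fin m)) = (ℓ + n - 2) * (m - 1) + 1 ∧
    ramsey3 (_root_.starGraph ℓ) T (⊤ : SimpleGraph (Fin m)) = (t + 1) * (n - 1) * (m - 1) + 1 := by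
  have hn1 : 1 ≤ n := Fin.pos_iff_nonempty.2 hT.isConnected.nonempty
  have heq : (ℓ + n - 2) * (m - 1) + 1 = (t + 1) * (n - 1) * (m - 1) + 1 := by
    have h1 : ℓ + n - 2 = (t + 1) * (n - 1) := by
      have h2 : (t + 1) * (n - 1) = t * (n - 1) + (n - 1) := by ring
      generalize hx : t * (n - 1) = x at hℓ h2
      omega
    rw [h1]
  have main : ramsey3 (_root_.starGraph ℓ) T (⊤ : SimpleGraph (Fin m)) =
      (t + 1) * (n - 1) * (m - 1) + 1 := by
    have hmem : RamseyProp3 ((t + 1) * (n - 1) * (m - 1) + 1)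
        (_root_.starGraph ℓ) T (⊤ : SimpleGraph (Fin m)) := by
      intro c hs
      have h := upper hℓ hT m (Fin ((t + 1) * (n - 1) * (m - 1) + 1)) c hs
        (by rw [Fintype.card_fin])
      exact h
    have hnot : ¬ RamseyProp3 ((t + 1) * (n - 1) * (m - 1))
        (_root_.starGraph ℓ) T (⊤ : SimpleGraph (Fin m)) := by
      rcases Nat.lt_or_ge n 2 with h | h
      · have hn' : n = 1 := by omega
        subst hn'
        have hz : (t + 1) * (1 - 1) * (m - 1) = 0 := by norm_num
        rw [hz]
        exact lower0 le_rfl (by omega)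
      · exact lower h hm hℓ hT
    apply le_antisymm
    · exact Nat.sInf_le hmem
    · exact le_csInf ⟨_, hmem⟩ (fun b hb => by
        by_contra hcon
        push_neg at hcon
        exact hnot (rp3_mono (Nat.lt_succ_iff.mp hcon) hb))
  refine ⟨?_, main⟩
  rw [heq]
  exact main
end
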